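/- arXiv:1201.5199 — 4 statements merged into one kernel-verified Lean document; each statement's English description precedes it below -/
import Mathlib

section
/- Let g : Ω → ℝ be bounded and nonnegative, let D = {x ∈ Ω : g(x) > 0}, and assume the non-degeneracy condition g_*(x) > 0 for every x ∈ int D, where g_*(x) = liminf_{y→x} g(y). Let f : ∂Ω → ℝ be Lipschitz continuous, let (p_k) be a sequence of reals with p_k > 4 and p_k → ∞, and for each k let u_k ∈ C(cl Ω) be a viscosity solution of Δ_{p_k} u = g in Ω with u_k = f on ∂Ω. If (u_k) converges uniformly on cl Ω to a function u_∞, then u_∞ is a solution of the gradient constraint problem (GC) for the data (Ω, D, f). -/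
open Metric Set Filter MeasureTheory
open scoped Topology RealInnerProductSpace NNReal

noncomputable section

variable {n : ℕ}

local notation "E" => EuclideanSpace ℝ (Fin n)

/-- The infinity Laplacian Δ∞φ(x) = ⟨D²φ(x) Dφ(x), Dφ(x)⟩. -/
def infLap (φ : E → ℝ) (x : E) : ℝ :=
  inner ℝ ((fderiv ℝ (gradient φ) x) (gradient φ x)) (gradient φ x)

/-- The Laplacian Δφ(x), as the trace of the Hessian. -/
def lap (φ : E → ℝ) (x : E) : ℝ :=
  LinearMap.trace ℝ E (fderiv ℝ (gradient φ) x).toLinearMap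

/-- Δ_pφ(x) = |Dφ(x)|^{p−4} ((p−2) Δ∞φ(x) + |Dφ(x)|² Δφ(x)). -/
def pLap (p : ℝ) (φ : E → ℝ) (x : E) : ℝ :=
  ‖gradient φ x‖ ^ (p - 4) * ((p - 2) * infLap φ x + ‖gradient φ x‖ ^ 2 * lap φ x)

/-- g − φ has a strict local maximum at x relative to s. -/
def IsStrictLocalMaxOn (g : E → ℝ) (s : Set E) (x : E) : Prop :=
  ∃ r > 0, ∀ y ∈ ball x r ∩ s, y ≠ x → g y < g x

def IsStrictLocalMinOn (g : E → ℝ) (s : Set E) (x : E) : Prop :=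
  ∃ r > 0, ∀ y ∈ ball x r ∩ s, y ≠ x → g x < g y

/-- characteristic function of a set -/
def chi (S : Set E) (x : E) : ℝ := S.indicator (fun _ => (1:ℝ)) x

/-- viscosity subsolution of min{Δ∞u, |Du| − χ_D} = 0 in Ω -/
def IsGCsub (Ω D : Set E) (u : E → ℝ) : Prop :=
  ∀ x ∈ Ω, ∀ φ : E → ℝ, ContDiffOn ℝ 2 φ Ω →
    IsStrictLocalMaxOn (fun y => u y - φ y) Ω x →
    0 ≤ infLap φ x ∧ chi (interior D) x ≤ ‖gradient φ x‖

/-- viscosity supersolution of min{Δ∞u, |Du| − χ_D} = 0 in Ω -/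
def IsGCsuper (Ω D : Set E) (u : E → ℝ) : Prop :=
  ∀ x ∈ Ω, ∀ φ : E → ℝ, ContDiffOn ℝ 2 φ Ω →
    IsStrictLocalMinOn (fun y => u y - φ y) Ω x →
    infLap φ x ≤ 0 ∨ ‖gradient φ x‖ ≤ chi (closure D) x

/-- solution of the gradient constraint problem (GC) for the data (Ω, D, f) -/
def IsGCsol (Ω D : Set E) (f u : E → ℝ) : Prop :=
  ContinuousOn u (closure Ω) ∧ IsGCsub Ω D u ∧ IsGCsuper Ω D u ∧
    ∀ x ∈ frontier Ω, u x = f x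

/-- viscosity solution of Jensen's equation min{Δ∞u, |Du| − 1} = 0 in Ω -/
def IsJensenSol (Ω : Set E) (u : E → ℝ) : Prop :=
  (∀ x ∈ Ω, ∀ φ : E → ℝ, ContDiffOn ℝ 2 φ Ω →
    IsStrictLocalMaxOn (fun y => u y - φ y) Ω x →
    0 ≤ infLap φ x ∧ 1 ≤ ‖gradient φ x‖) ∧
  (∀ x ∈ Ω, ∀ φ : E → ℝ, ContDiffOn ℝ 2 φ Ω →
    IsStrictLocalMinOn (fun y => u y - φ y) Ω x →
    infLap φ x ≤ 0 ∨ ‖gradient φ x‖ ≤ 1)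

/-- viscosity solution of Δ∞u = 0 in the open set V -/
def IsInfHarmonic (V : Set E) (u : E → ℝ) : Prop :=
  (∀ x ∈ V, ∀ φ : E → ℝ, ContDiffOn ℝ 2 φ V →
    IsStrictLocalMaxOn (fun y => u y - φ y) V x → 0 ≤ infLap φ x) ∧
  (∀ x ∈ V, ∀ φ : E → ℝ, ContDiffOn ℝ 2 φ V →
    IsStrictLocalMinOn (fun y => u y - φ y) V x → infLap φ x ≤ 0)

/-- viscosity solution of Δ_p u = g in Ω -/
def IsPViscSol (Ω : Set E) (p : ℝ) (g : E → ℝ) (u : E → ℝ) : Prop :=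
  ContinuousOn u Ω ∧
  (∀ x ∈ Ω, ∀ φ : E → ℝ, ContDiffOn ℝ 2 φ Ω →
    IsStrictLocalMaxOn (fun y => u y - φ y) Ω x →
    Filter.liminf g (𝓝[Ω] x) ≤ pLap p φ x) ∧
  (∀ x ∈ Ω, ∀ φ : E → ℝ, ContDiffOn ℝ 2 φ Ω →
    IsStrictLocalMinOn (fun y => u y - φ y) Ω x →
    pLap p φ x ≤ Filter.limsup g (𝓝[Ω] x))

/-- the boundary strip Γ_ε -/
def GammaStrip (Ω : Set E) (ε : ℝ) : Set E :=
  {x | x ∉ Ω ∧ Metric.infDist x (frontier Ω) < ε}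

/-- dynamic programming principle for the D-game -/
def SatisfiesDPP_D (Ω D : Set E) (ε : ℝ) (u : E → ℝ) : Prop :=
  ∀ x ∈ Ω, u x = min ((sSup (u '' closedBall x ε) + sInf (u '' closedBall x ε)) / 2)
      (sSup (u '' closedBall x ε) - ε * chi D x)

/-- dynamic programming principle for the Ω-game -/
def SatisfiesDPP_Om (Ω : Set E) (ε : ℝ) (u : E → ℝ) : Prop :=
  ∀ x ∈ Ω, u x = min ((sSup (u '' closedBall x ε) + sInf (u '' closedBall x ε)) / 2)
      (sSup (u '' closedBall x ε) - ε)

/-- φ ∈ W^{2,∞}_loc(Ω): differentiable with locally Lipschitz gradient on Ω -/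
def W2InfLoc (Ω : Set E) (φ : E → ℝ) : Prop :=
  (∀ x ∈ Ω, DifferentiableAt ℝ φ x) ∧
  ∀ x ∈ Ω, ∃ K : ℝ≥0, ∃ s ∈ 𝓝[Ω] x, LipschitzOnWith K (gradient φ) s

/-- ess limsup_{y→x} F(y) -/
def essLimsupAt (F : E → ℝ) (x : E) : ℝ :=
  ⨅ r ∈ Set.Ioi (0:ℝ), essSup F (volume.restrict (ball x r))

/-- ess liminf_{y→x} F(y) -/
def essLiminfAt (F : E → ℝ) (x : E) : ℝ :=
  ⨆ r ∈ Set.Ioi (0:ℝ), essInf F (volume.restrict (ball x r))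

/-- L∞-viscosity subsolution of min{Δ∞u, |Du| − χ_D} = 0 in Ω -/
def IsLinfGCsub (Ω D : Set E) (u : E → ℝ) : Prop :=
  ∀ x ∈ Ω, ∀ φ : E → ℝ, W2InfLoc Ω φ →
    IsStrictLocalMaxOn (fun y => u y - φ y) Ω x →
    0 ≤ essLimsupAt (fun y => min (infLap φ y) (‖gradient φ y‖ - chi D y)) x

/-- L∞-viscosity supersolution of min{Δ∞u, |Du| − χ_D} = 0 in Ω -/
def IsLinfGCsuper (Ω D : Set E) (u : E → ℝ) : Prop :=
  ∀ x ∈ Ω, ∀ φ : E → ℝ, W2InfLoc Ω φ →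
    IsStrictLocalMinOn (fun y => u y - φ y) Ω x →
    essLiminfAt (fun y => min (infLap φ y) (‖gradient φ y‖ - chi D y)) x ≤ 0

/-- L∞-viscosity solution of Δ_p u = χ_D in Ω -/
def IsLinfPSol (Ω D : Set E) (p : ℝ) (u : E → ℝ) : Prop :=
  ContinuousOn u Ω ∧
  (∀ x ∈ Ω, ∀ φ : E → ℝ, W2InfLoc Ω φ →
    IsStrictLocalMaxOn (fun y => u y - φ y) Ω x →
    0 ≤ essLimsupAt (fun y => pLap p φ y - chi D y) x) ∧
  (∀ x ∈ Ω, ∀ φ : E → ℝ, W2InfLoc Ω φ →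
    IsStrictLocalMinOn (fun y => u y - φ y) Ω x →
    essLiminfAt (fun y => pLap p φ y - chi D y) x ≤ 0)


open InnerProductSpace

/-- quartic bump -/
def quart (a : E) (y : E) : ℝ := (⟪y - a, y - a⟫_ℝ) ^ 2

lemma quart_contDiff (a : E) : ContDiff ℝ 2 (quart a) := by
  have h1 : ContDiff ℝ 2 (fun y : E => y - a) := contDiff_id.sub contDiff_const
  exact (h1.inner ℝ h1).pow 2

lemma quart_hasGradientAt (a y : E) :
    HasGradientAt (quart a) ((4 * ⟪y - a, y - a⟫_ℝ) • (y - a)) y := by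
  have hsub : HasFDerivAt (fun z : E => z - a) (ContinuousLinearMap.id ℝ E) y :=
    (hasFDerivAt_id y).sub_const a
  have hm : HasFDerivAt (fun z : E => (⟪z - a, z - a⟫_ℝ : ℝ))
      ((fderivInnerCLM ℝ (y - a, y - a)).comp
        ((ContinuousLinearMap.id ℝ E).prod (ContinuousLinearMap.id ℝ E))) y :=
    hsub.inner ℝ hsub
  have hq : HasFDerivAt (quart a)
      (⟪y - a, y - a⟫_ℝ • ((fderivInnerCLM ℝ (y - a, y - a)).comp
        ((ContinuousLinearMap.id ℝ E).prod (ContinuousLinearMap.id ℝ E))) +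
       ⟪y - a, y - a⟫_ℝ • ((fderivInnerCLM ℝ (y - a, y - a)).comp
        ((ContinuousLinearMap.id ℝ E).prod (ContinuousLinearMap.id ℝ E)))) y := by
    have hfun : quart a = fun z : E => (⟪z - a, z - a⟫_ℝ : ℝ) * ⟪z - a, z - a⟫_ℝ := by
      funext z; show (⟪z - a, z - a⟫_ℝ : ℝ) ^ 2 = _; ring
    rw [hfun]; exact hm.mul hm
  rw [hasGradientAt_iff_hasFDerivAt]
  refine hq.congr_fderiv ?_
  ext v
  simp only [ContinuousLinearMap.add_apply, ContinuousLinearMap.smul_apply,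
    ContinuousLinearMap.comp_apply, ContinuousLinearMap.prod_apply,
    ContinuousLinearMap.id_apply, fderivInnerCLM_apply, toDual_apply_apply, quart]
  rw [real_inner_smul_left]
  rw [real_inner_comm v (y - a)]
  rw [smul_eq_mul]
  ring

lemma quart_gradient (a : E) :
    gradient (quart a) = fun y => (4 * ⟪y - a, y - a⟫_ℝ) • (y - a) :=
  gradient_eq (fun y => quart_hasGradientAt a y)

lemma quart_gradient_at (a : E) : gradient (quart a) a = 0 := by
  rw [quart_gradient]; simp

lemma quart_fderiv_gradient (a : E) :
    HasFDerivAt (gradient (quart a)) (0 : E →L[ℝ] E) a := by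
  rw [hasFDerivAt_iff_isLittleO_nhds_zero, quart_gradient]
  rw [Asymptotics.isLittleO_iff]
  intro c hc
  have hr : (0:ℝ) < Real.sqrt (c / 4) := Real.sqrt_pos.2 (by linarith)
  filter_upwards [Metric.ball_mem_nhds (0:E) hr] with h hmem
  have hnorm : ‖h‖ < Real.sqrt (c / 4) := by
    rwa [Metric.mem_ball, dist_zero_right] at hmem
  have h1 : (⟪a + h - a, a + h - a⟫_ℝ : ℝ) = ‖h‖ ^ 2 := by
    rw [add_sub_cancel_left]; exact real_inner_self_eq_norm_sq _
  have h2 : ‖(4 * ⟪a + h - a, a + h - a⟫_ℝ) • (a + h - a)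
      - (4 * ⟪a - a, a - a⟫_ℝ) • (a - a) - (0 : E →L[ℝ] E) h‖
      = 4 * ‖h‖ ^ 2 * ‖h‖ := by
    have e1 : a + h - a = h := by abel
    rw [e1]
    have e2 : (4 * ⟪a - a, a - a⟫_ℝ) • (a - a) = (0:E) := by simp
    rw [e2, sub_zero, ContinuousLinearMap.zero_apply, sub_zero, norm_smul,
      real_inner_self_eq_norm_sq, Real.norm_eq_abs, abs_of_nonneg (by positivity)]
  rw [h2]
  have h3 : ‖h‖ ^ 2 ≤ c / 4 := by
    have := Real.sq_sqrt (le_of_lt (show (0:ℝ) < c/4 by linarith))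
    nlinarith [norm_nonneg h, hnorm]
  nlinarith [norm_nonneg h]

lemma grad_contDiffOn {Ω : Set E} {φ : E → ℝ} (hΩo : IsOpen Ω) (hφ : ContDiffOn ℝ 2 φ Ω) :
    ContDiffOn ℝ 1 (gradient φ) Ω := by
  have hfd : ContDiffOn ℝ 1 (fderiv ℝ φ) Ω :=
    hφ.fderiv_of_isOpen hΩo (by norm_num)
  have hcle : ContDiff ℝ 1 (fun L : (E →L[ℝ] ℝ) => (toDual ℝ E).symm L) :=
    (toDual ℝ E).symm.toContinuousLinearEquiv.toContinuousLinearMap.contDiff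
  exact hcle.comp_contDiffOn hfd

lemma grad_continuousOn {Ω : Set E} {φ : E → ℝ} (hΩo : IsOpen Ω) (hφ : ContDiffOn ℝ 2 φ Ω) :
    ContinuousOn (gradient φ) Ω :=
  (grad_contDiffOn hΩo hφ).continuousOn

lemma hess_continuousOn {Ω : Set E} {φ : E → ℝ} (hΩo : IsOpen Ω) (hφ : ContDiffOn ℝ 2 φ Ω) :
    ContinuousOn (fun y => fderiv ℝ (gradient φ) y) Ω :=
  (grad_contDiffOn hΩo hφ).continuousOn_fderiv_of_isOpen hΩo (le_refl _)

lemma infLap_continuousOn {Ω : Set E} {φ : E → ℝ} (hΩo : IsOpen Ω) (hφ : ContDiffOn ℝ 2 φ Ω) :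
    ContinuousOn (infLap φ) Ω := by
  have h1 := grad_continuousOn hΩo hφ
  have h2 := hess_continuousOn hΩo hφ
  exact (h2.clm_apply h1).inner (𝕜 := ℝ) h1

lemma lap_continuousOn {Ω : Set E} {φ : E → ℝ} (hΩo : IsOpen Ω) (hφ : ContDiffOn ℝ 2 φ Ω) :
    ContinuousOn (lap φ) Ω := by
  have h2 := hess_continuousOn hΩo hφ
  have htr : Continuous (fun A : E →L[ℝ] E => LinearMap.trace ℝ E A.toLinearMap) := by
    apply LinearMap.continuous_of_finiteDimensional
      (f := (LinearMap.trace ℝ E).comp (ContinuousLinearMap.coeLM ℝ))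
  exact htr.comp_continuousOn h2

lemma phi_diffOn {Ω : Set E} {φ : E → ℝ} (hΩo : IsOpen Ω) (hφ : ContDiffOn ℝ 2 φ Ω) :
    ∀ x ∈ Ω, DifferentiableAt ℝ φ x := fun x hx =>
  (hφ.differentiableOn (by norm_num)).differentiableAt (hΩo.mem_nhds hx)


lemma gimel_neBot {Ω : Set E} {x : E} (hx : x ∈ Ω) : (𝓝[Ω] x).NeBot :=
  mem_closure_iff_nhdsWithin_neBot.mp (subset_closure hx)

lemma g_bddAbove {Ω : Set E} {g : E → ℝ} {M : ℝ} (hg : ∀ y ∈ Ω, g y ≤ M) (x : E) :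
    IsBoundedUnder (· ≤ ·) (𝓝[Ω] x) g :=
  ⟨M, eventually_mem_nhdsWithin.mono fun y hy => hg y hy⟩

lemma g_bddBelow {Ω : Set E} {g : E → ℝ} {M : ℝ} (hg : ∀ y ∈ Ω, M ≤ g y) (x : E) :
    IsBoundedUnder (· ≥ ·) (𝓝[Ω] x) g :=
  ⟨M, eventually_mem_nhdsWithin.mono fun y hy => hg y hy⟩

lemma liminf_g_nonneg {Ω : Set E} {g : E → ℝ} {M : ℝ} (hgup : ∀ y ∈ Ω, g y ≤ M)
    (hg : ∀ y ∈ Ω, 0 ≤ g y)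
    {x : E} (hx : x ∈ Ω) : 0 ≤ Filter.liminf g (𝓝[Ω] x) := by
  haveI := gimel_neBot hx
  exact Filter.le_liminf_of_le (g_bddAbove hgup x).isCoboundedUnder_ge
    (eventually_mem_nhdsWithin.mono fun y hy => hg y hy)

lemma limsup_g_le {Ω : Set E} {g : E → ℝ} {M M' : ℝ} (hglo : ∀ y ∈ Ω, M' ≤ g y)
    (hg : ∀ y ∈ Ω, g y ≤ M)
    {x : E} (hx : x ∈ Ω) : Filter.limsup g (𝓝[Ω] x) ≤ M := by
  haveI := gimel_neBot hx
  exact Filter.limsup_le_of_le (g_bddBelow hglo x).isCoboundedUnder_le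
    (eventually_mem_nhdsWithin.mono fun y hy => hg y hy)

lemma liminf_lsc {Ω : Set E} {g : E → ℝ} {M M' : ℝ}
    (hglo : ∀ y ∈ Ω, M' ≤ g y)
    (hgbd : ∀ y ∈ Ω, g y ≤ M) {x : E} (hx : x ∈ Ω) {c : ℝ}
    (hc : c < Filter.liminf g (𝓝[Ω] x)) :
    ∃ U, IsOpen U ∧ x ∈ U ∧ ∀ z ∈ U ∩ Ω, c ≤ Filter.liminf g (𝓝[Ω] z) := by
  haveI := gimel_neBot hx
  have hev : ∀ᶠ y in 𝓝[Ω] x, c < g y :=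
    Filter.eventually_lt_of_lt_liminf hc (g_bddBelow hglo x)
  rw [eventually_nhdsWithin_iff, _root_.eventually_nhds_iff] at hev
  obtain ⟨U, hU, hUo, hxU⟩ := hev
  refine ⟨U, hUo, hxU, fun z hz => ?_⟩
  haveI := gimel_neBot hz.2
  refine Filter.le_liminf_of_le (g_bddAbove hgbd z).isCoboundedUnder_ge ?_
  have hmem : U ∩ Ω ∈ 𝓝[Ω] z :=
    mem_nhdsWithin.mpr ⟨U, hUo, hz.1, fun y hy => hy⟩
  exact Filter.eventually_iff_exists_mem.mpr
    ⟨U ∩ Ω, hmem, fun y hy => (hU y hy.1 hy.2).le⟩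

lemma limsup_zero_near {Ω : Set E} {g : E → ℝ} {M : ℝ}
    (hgbd : ∀ y ∈ Ω, -M ≤ g y) (hgz : ∀ y ∈ Ω, y ∉ closure ({w ∈ Ω | 0 < g w}) → g y ≤ 0)
    {x : E} (hx : x ∉ closure ({w ∈ Ω | 0 < g w})) :
    ∀ z ∈ (closure ({w ∈ Ω | 0 < g w}))ᶜ ∩ Ω, Filter.limsup g (𝓝[Ω] z) ≤ 0 := by
  intro z hz
  haveI := gimel_neBot hz.2
  refine Filter.limsup_le_of_le (g_bddBelow hgbd z).isCoboundedUnder_le ?_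
  have hmem : (closure ({w ∈ Ω | 0 < g w}))ᶜ ∩ Ω ∈ 𝓝[Ω] z :=
    mem_nhdsWithin.mpr ⟨_, isClosed_closure.isOpen_compl, hz.1, fun y hy => hy⟩
  exact Filter.eventually_iff_exists_mem.mpr
    ⟨_, hmem, fun y hy => hgz y hy.2 hy.1⟩

lemma key_decay {b : ℝ} (hb0 : 0 < b) (hb1 : b < 1) (A B : ℝ) :
    Tendsto (fun q : ℝ => (q - 2) * b ^ (q - 4) * A + b ^ (q - 4) * B) atTop (𝓝 0) := by
  have hrp : Tendsto (fun q : ℝ => b ^ (q - 4)) atTop (𝓝 0) := by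
    have := (tendsto_rpow_atTop_of_base_lt_one b (by linarith) hb1).comp
      (tendsto_atTop_add_const_right atTop (-4) tendsto_id)
    simpa [Function.comp_def, sub_eq_add_neg] using this
  have hc : 0 < -Real.log b := by
    have := Real.log_neg hb0 hb1; linarith
  have hlin : Tendsto (fun q : ℝ => (q - 2) * b ^ (q - 4)) atTop (𝓝 0) := by
    have hbase : Tendsto (fun q : ℝ => q ^ (1:ℝ) * Real.exp (-(-Real.log b) * q)
        * Real.exp (4 * (-Real.log b))) atTop (𝓝 0) := by
      simpa using (tendsto_rpow_mul_exp_neg_mul_atTop_nhds_zero 1 _ hc).mul_const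
        (Real.exp (4 * (-Real.log b)))
    apply squeeze_zero' (g := fun q : ℝ => q ^ (1:ℝ) * Real.exp (-(-Real.log b) * q)
        * Real.exp (4 * (-Real.log b))) ?_ ?_ hbase
    · filter_upwards [eventually_ge_atTop (2:ℝ)] with q hq
      have : (0:ℝ) ≤ b ^ (q - 4) := (Real.rpow_pos_of_pos hb0 _).le
      nlinarith
    · filter_upwards [eventually_ge_atTop (2:ℝ)] with q hq
      have h1 : b ^ (q - 4) = Real.exp (-(-Real.log b) * q) * Real.exp (4 * (-Real.log b)) := by
        rw [Real.rpow_def_of_pos hb0, ← Real.exp_add]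
        ring_nf
      have h2 : q - 2 ≤ q ^ (1:ℝ) := by rw [Real.rpow_one]; linarith
      rw [h1]
      have h3 : (0:ℝ) < Real.exp (-(-Real.log b) * q) * Real.exp (4 * (-Real.log b)) :=
        by positivity
      calc (q - 2) * (Real.exp (-(-Real.log b) * q) * Real.exp (4 * (-Real.log b)))
          ≤ q ^ (1:ℝ) * (Real.exp (-(-Real.log b) * q) * Real.exp (4 * (-Real.log b))) := by
            exact mul_le_mul_of_nonneg_right h2 h3.le
        _ = q ^ (1:ℝ) * Real.exp (-(-Real.log b) * q) * Real.exp (4 * (-Real.log b)) := by ring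
  have := (hlin.mul_const A).add (hrp.mul_const B)
  simpa using this


lemma exists_max_seq {Ω : Set E} {u : ℕ → E → ℝ} {v φ : E → ℝ}
    (hucont : ∀ k, ContinuousOn (u k) (closure Ω))
    (hconv : TendstoUniformlyOn u v atTop (closure Ω))
    (hφc : ContinuousOn φ Ω)
    {x : E} {r : ℝ} (hr : 0 < r) (hball : closedBall x r ⊆ Ω)
    (hmax : ∀ y ∈ closedBall x r, y ≠ x → v y - φ y < v x - φ x) :
    ∃ z : ℕ → E, (∀ k, z k ∈ closedBall x r ∧
        ∀ y ∈ closedBall x r, u k y - φ y ≤ u k (z k) - φ (z k)) ∧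
      Tendsto z atTop (𝓝 x) := by
  have hxball : x ∈ closedBall x r := mem_closedBall_self hr.le
  have hsubcl : closedBall x r ⊆ closure Ω := hball.trans subset_closure
  have hvcont : ContinuousOn v (closure Ω) :=
    hconv.continuousOn (Filter.Eventually.of_forall hucont).frequently
  have hsel : ∀ k : ℕ, ∃ z ∈ closedBall x r,
      ∀ y ∈ closedBall x r, u k y - φ y ≤ u k z - φ z := by
    intro k
    have hk : ContinuousOn (fun y => u k y - φ y) (closedBall x r) :=
      ((hucont k).mono hsubcl).sub (hφc.mono hball)
    obtain ⟨z, hzmem, hzmax⟩ :=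
      (isCompact_closedBall x r).exists_isMaxOn ⟨x, hxball⟩ hk
    exact ⟨z, hzmem, fun y hy => hzmax hy⟩
  choose z hzmem hzmax using hsel
  refine ⟨z, fun k => ⟨hzmem k, hzmax k⟩, ?_⟩
  rw [Metric.tendsto_nhds]
  intro ε hε
  by_cases hS : (closedBall x r \ ball x ε).Nonempty
  · have hScomp : IsCompact (closedBall x r \ ball x ε) :=
      (isCompact_closedBall x r).diff isOpen_ball
    have hψ : ContinuousOn (fun y => v y - φ y) (closedBall x r \ ball x ε) :=
      ((hvcont.mono hsubcl).sub (hφc.mono hball)).mono diff_subset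
    obtain ⟨y0, hy0S, hy0max⟩ := hScomp.exists_isMaxOn hS hψ
    have hy0ne : y0 ≠ x := by
      intro h; exact hy0S.2 (h ▸ mem_ball_self hε)
    have hδ : 0 < (v x - φ x) - (v y0 - φ y0) := by
      have := hmax y0 hy0S.1 hy0ne; linarith
    set δ := (v x - φ x) - (v y0 - φ y0) with hδdef
    have hunif := Metric.tendstoUniformlyOn_iff.mp hconv (δ/2) (by linarith)
    filter_upwards [hunif] with k hk
    by_contra hcon
    push_neg at hcon
    have hzS : z k ∈ closedBall x r \ ball x ε :=
      ⟨hzmem k, fun hb => absurd (mem_ball.mp hb) (not_lt.mpr hcon)⟩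
    have h1 : dist (v (z k)) (u k (z k)) < δ/2 := hk _ (hsubcl (hzmem k))
    have h2 : dist (v x) (u k x) < δ/2 := hk _ (hsubcl hxball)
    rw [Real.dist_eq] at h1 h2
    have h3 : u k (z k) - φ (z k) < v (z k) - φ (z k) + δ/2 := by
      cases' abs_lt.mp h1 with hl hr'; linarith
    have h4 : v y0 - φ y0 ≥ v (z k) - φ (z k) := hy0max hzS
    have h5 : v x - φ x < u k x - φ x + δ/2 := by
      cases' abs_lt.mp h2 with hl hr'; linarith
    have h6 : u k x - φ x ≤ u k (z k) - φ (z k) := hzmax k x hxball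
    simp only [hδdef] at *
    linarith
  · rw [not_nonempty_iff_eq_empty, diff_eq_empty] at hS
    exact Filter.Eventually.of_forall fun k => mem_ball.mp (hS (hzmem k))

lemma perturb_eq {Ω : Set E} (hΩo : IsOpen Ω) {φ : E → ℝ} (hφ : ContDiffOn ℝ 2 φ Ω)
    {a : E} (ha : a ∈ Ω) (c : ℝ) :
    gradient (fun y => φ y + c * quart a y) a = gradient φ a ∧
    fderiv ℝ (gradient (fun y => φ y + c * quart a y)) a = fderiv ℝ (gradient φ) a := by
  have hqd : ∀ y : E, DifferentiableAt ℝ (fun z => c * quart a z) y := fun y =>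
    (differentiableAt_const c).mul
      ((quart_contDiff a).differentiable (by norm_num)).differentiableAt
  have hφd := phi_diffOn hΩo hφ
  have hgradq : ∀ y : E, gradient (fun z => c * quart a z) y
      = c • gradient (quart a) y := by
    intro y
    have h1 : HasFDerivAt (fun z => c * quart a z) (c • fderiv ℝ (quart a) y) y :=
      ((quart_hasGradientAt a y).hasFDerivAt.differentiableAt.hasFDerivAt).const_mul c
    rw [gradient, h1.fderiv, _root_.map_smul, ← gradient]
  have hgradsum : ∀ y ∈ Ω, gradient (fun z => φ z + c * quart a z) y
      = gradient φ y + c • gradient (quart a) y := by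
    intro y hy
    have h1 : fderiv ℝ (fun z => φ z + c * quart a z) y
        = fderiv ℝ φ y + fderiv ℝ (fun z => c * quart a z) y :=
      fderiv_add (hφd y hy) (hqd y)
    rw [gradient, h1, map_add, ← gradient, ← gradient, hgradq]
  constructor
  · rw [hgradsum a ha, quart_gradient_at, smul_zero, add_zero]
  · have heq : (gradient (fun z => φ z + c * quart a z))
        =ᶠ[𝓝 a] fun y => gradient φ y + c • gradient (quart a) y := by
      filter_upwards [hΩo.mem_nhds ha] with y hy using hgradsum y hy
    rw [heq.fderiv_eq]
    have hgd : DifferentiableAt ℝ (gradient φ) a :=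
      ((grad_contDiffOn hΩo hφ).differentiableOn (by norm_num)).differentiableAt
        (hΩo.mem_nhds ha)
    have hq0 : HasFDerivAt (fun y => c • gradient (quart a) y)
        ((0 : E →L[ℝ] E)) a := by
      have := (quart_fderiv_gradient a).const_smul c
      exact this.congr_fderiv (smul_zero c)
    have := (hgd.hasFDerivAt.add hq0).fderiv
    rw [add_zero] at this; exact this


lemma perturb_pLap {Ω : Set E} (hΩo : IsOpen Ω) {φ : E → ℝ} (hφ : ContDiffOn ℝ 2 φ Ω)
    {a : E} (ha : a ∈ Ω) (c p : ℝ) :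
    pLap p (fun y => φ y + c * quart a y) a = pLap p φ a ∧
    infLap (fun y => φ y + c * quart a y) a = infLap φ a ∧
    gradient (fun y => φ y + c * quart a y) a = gradient φ a := by
  obtain ⟨h1, h2⟩ := perturb_eq hΩo hφ ha c
  refine ⟨?_, ?_, h1⟩ <;> simp only [pLap, infLap, lap, h1, h2]


lemma exists_min_seq {Ω : Set E} {u : ℕ → E → ℝ} {v φ : E → ℝ}
    (hucont : ∀ k, ContinuousOn (u k) (closure Ω))
    (hconv : TendstoUniformlyOn u v atTop (closure Ω))
    (hφc : ContinuousOn φ Ω)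
    {x : E} {r : ℝ} (hr : 0 < r) (hball : closedBall x r ⊆ Ω)
    (hmin : ∀ y ∈ closedBall x r, y ≠ x → v x - φ x < v y - φ y) :
    ∃ z : ℕ → E, (∀ k, z k ∈ closedBall x r ∧
        ∀ y ∈ closedBall x r, u k (z k) - φ (z k) ≤ u k y - φ y) ∧
      Tendsto z atTop (𝓝 x) := by
  have hconvneg : TendstoUniformlyOn (fun k y => -(u k y)) (fun y => -(v y)) atTop (closure Ω) := by
    rw [Metric.tendstoUniformlyOn_iff] at hconv ⊢
    intro ε hε
    filter_upwards [hconv ε hε] with k hk y hy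
    have := hk y hy
    rw [Real.dist_eq] at this ⊢
    rw [neg_sub_neg, abs_sub_comm]
    exact this
  obtain ⟨z, hz, hzt⟩ := exists_max_seq (u := fun k y => -(u k y)) (v := fun y => -(v y))
      (φ := fun y => -(φ y)) (fun k => (hucont k).neg) hconvneg hφc.neg hr hball
      (fun y hy hne => by have := hmin y hy hne; linarith)
  exact ⟨z, fun k => ⟨(hz k).1, fun y hy => by have := (hz k).2 y hy; linarith⟩,
    hzt⟩


set_option maxHeartbeats 1000000 in
/-- uniform limits of viscosity solutions of Δ_{p_k} u = g with boundary data f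
solve the gradient constraint problem for (Ω, D, f), D = {g > 0}. -/
theorem stmt_0 (hn : 1 ≤ n) (Ω D : Set E) (hΩo : IsOpen Ω) (hΩne : Ω.Nonempty)
    (hΩb : Bornology.IsBounded Ω)
    (g : E → ℝ) (M : ℝ) (hgbd : ∀ x ∈ Ω, |g x| ≤ M) (hgnn : ∀ x ∈ Ω, 0 ≤ g x)
    (hDdef : D = {x ∈ Ω | 0 < g x})
    (hnondeg : ∀ x ∈ interior D, 0 < Filter.liminf g (𝓝[Ω] x))
    (f : E → ℝ) (K : ℝ≥0) (hf : LipschitzOnWith K f (frontier Ω))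
    (p : ℕ → ℝ) (hp4 : ∀ k, 4 < p k) (hp : Tendsto p atTop atTop)
    (u : ℕ → E → ℝ) (hucont : ∀ k, ContinuousOn (u k) (closure Ω))
    (husol : ∀ k, IsPViscSol Ω (p k) g (u k))
    (hubdry : ∀ k, ∀ x ∈ frontier Ω, u k x = f x)
    (uinf : E → ℝ) (hconv : TendstoUniformlyOn u uinf atTop (closure Ω)) :
    IsGCsol Ω D f uinf := by
  have hgle : ∀ y ∈ Ω, g y ≤ M := fun y hy => (abs_le.mp (hgbd y hy)).2
  have hgge : ∀ y ∈ Ω, -M ≤ g y := fun y hy => (abs_le.mp (hgbd y hy)).1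
  have hM0 : 0 ≤ M := by
    obtain ⟨y, hy⟩ := hΩne
    exact le_trans (hgnn y hy) (hgle y hy)
  have huinfc : ContinuousOn uinf (closure Ω) :=
    hconv.continuousOn (Filter.Eventually.of_forall hucont).frequently
  refine ⟨huinfc, ?_, ?_, ?_⟩
  · -- subsolution
    intro x hx φ hφ hsm
    obtain ⟨s, hs, hsmax⟩ := hsm
    have hxs : x ∈ Ω ∩ ball x s := ⟨hx, mem_ball_self hs⟩
    obtain ⟨r0, hr0, hball0⟩ := Metric.isOpen_iff.mp (hΩo.inter isOpen_ball) x hxs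
    set r := r0/2 with hrdef
    have hr : 0 < r := by positivity
    have hball : closedBall x r ⊆ Ω ∩ ball x s :=
      (closedBall_subset_ball (by simp [hrdef]; linarith)).trans hball0
    have hballΩ : closedBall x r ⊆ Ω := hball.trans inter_subset_left
    have hmax' : ∀ y ∈ closedBall x r, y ≠ x → uinf y - φ y < uinf x - φ x := by
      intro y hy hne
      exact hsmax y ⟨(hball hy).2, (hball hy).1⟩ hne
    obtain ⟨z, hz, hztend⟩ := exists_max_seq hucont hconv
      (hφ.continuousOn) hr hballΩ hmax'
    have hzΩ : ∀ k, z k ∈ Ω := fun k => hballΩ (hz k).1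
    -- the key viscosity inequality at near-maximum points
    have hkey : ∀ k, z k ∈ ball x r →
        Filter.liminf g (𝓝[Ω] (z k)) ≤ pLap (p k) φ (z k) := by
      intro k hzk
      set a := z k with hadef
      have haΩ : a ∈ Ω := hzΩ k
      have hφk : ContDiffOn ℝ 2 (fun y => φ y + 1 * quart a y) Ω :=
        hφ.add ((contDiff_const.mul (quart_contDiff a)).contDiffOn)
      have hstrict : IsStrictLocalMaxOn (fun y => u k y - (φ y + 1 * quart a y)) Ω a := by
        refine ⟨r - dist a x, by simpa using mem_ball.mp hzk, ?_⟩
        intro y hy hne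
        have hyball : y ∈ closedBall x r := by
          have ht := dist_triangle y a x
          have hy1 : dist y a < r - dist a x := mem_ball.mp hy.1
          exact mem_closedBall.mpr (by linarith)
        have h1 : u k y - φ y ≤ u k a - φ a := (hz k).2 y hyball
        have h2 : 0 < quart a y := by
          have hny : (0:ℝ) < ‖y - a‖ := norm_pos_iff.mpr (sub_ne_zero.mpr hne)
          rw [quart, real_inner_self_eq_norm_sq]
          positivity
        have h3 : quart a a = 0 := by simp [quart]
        simp only [h3]
        linarith
      have hvisc := (husol k).2.1 a haΩ _ hφk hstrict
      rwa [(perturb_pLap hΩo hφ haΩ 1 (p k)).1] at hvisc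
    -- limits of the derivative data along z
    have hgz : Tendsto (fun k => gradient φ (z k)) atTop (𝓝 (gradient φ x)) :=
      (((grad_continuousOn hΩo hφ).continuousAt (hΩo.mem_nhds hx)).tendsto).comp hztend
    have haz : Tendsto (fun k => ‖gradient φ (z k)‖) atTop (𝓝 ‖gradient φ x‖) :=
      hgz.norm
    have hIz : Tendsto (fun k => infLap φ (z k)) atTop (𝓝 (infLap φ x)) :=
      (((infLap_continuousOn hΩo hφ).continuousAt (hΩo.mem_nhds hx)).tendsto).comp hztend
    have hLz : Tendsto (fun k => lap φ (z k)) atTop (𝓝 (lap φ x)) :=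
      (((lap_continuousOn hΩo hφ).continuousAt (hΩo.mem_nhds hx)).tendsto).comp hztend
    have hev1 : ∀ᶠ k in atTop, z k ∈ ball x r :=
      hztend (isOpen_ball.mem_nhds (mem_ball_self hr))
    set I := infLap φ x with hIdef
    set L := lap φ x with hLdef
    set aN := ‖gradient φ x‖ with haNdef
    clear_value I L aN
    constructor
    · -- 0 ≤ infLap φ x
      by_cases hg0 : gradient φ x = 0
      · simp [infLap, hg0, hIdef]
      · by_contra hI
        push_neg at hI
        have haN : 0 < aN := by rw [haNdef]; exact norm_pos_iff.mpr hg0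
        have e2 : ∀ᶠ k in atTop, aN/2 < ‖gradient φ (z k)‖ :=
          haz.eventually (eventually_gt_nhds (by linarith))
        have e3 : ∀ᶠ k in atTop, infLap φ (z k) < I/2 :=
          hIz.eventually (eventually_lt_nhds (by linarith))
        have e4 : ∀ᶠ k in atTop, lap φ (z k) < |L| + 1 :=
          hLz.eventually (eventually_lt_nhds (by linarith [le_abs_self L]))
        have e5 : ∀ᶠ k in atTop, ‖gradient φ (z k)‖ < aN + 1 :=
          haz.eventually (eventually_lt_nhds (by linarith))
        have hpc : Tendsto (fun k => (p k - 2) * (-I)) atTop atTop :=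
          (tendsto_atTop_add_const_right atTop (-2) hp).atTop_mul_const (by linarith)
        have e6 : ∀ᶠ k in atTop,
            2 * ((aN+1)^2 * (|L|+1) + 1) < (p k - 2) * (-I) :=
          hpc.eventually_gt_atTop _
        obtain ⟨k, h1, h2, h3, h4, h5, h6⟩ :=
          (hev1.and (e2.and (e3.and (e4.and (e5.and e6))))).exists
        have hlim := hkey k h1
        have hlim0 : (0:ℝ) ≤ Filter.liminf g (𝓝[Ω] (z k)) :=
          liminf_g_nonneg hgle hgnn (hzΩ k)
        set A := ‖gradient φ (z k)‖ with hAdef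
        clear_value A
        have hA0 : 0 < A := lt_trans (by linarith) h2
        have hrp : 0 < A ^ (p k - 4) := Real.rpow_pos_of_pos hA0 _
        have hT : 0 ≤ (p k - 2) * infLap φ (z k) + A^2 * lap φ (z k) := by
          by_contra hTneg
          push_neg at hTneg
          have : pLap (p k) φ (z k) < 0 := by
            rw [pLap, ← hAdef]
            exact mul_neg_of_pos_of_neg hrp hTneg
          linarith
        have hp2 : 0 < p k - 2 := by linarith [hp4 k]
        have hb1 : (p k - 2) * infLap φ (z k) ≤ (p k - 2) * (I/2) :=
          mul_le_mul_of_nonneg_left (le_of_lt h3) hp2.le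
        have hb2 : A^2 * lap φ (z k) ≤ (aN+1)^2 * (|L|+1) := by
          have hsq : A^2 ≤ (aN+1)^2 := by nlinarith
          have habs : (0:ℝ) < |L| + 1 := by positivity
          rcases le_or_gt (lap φ (z k)) 0 with hL0 | hL0
          · have hle : A^2 * lap φ (z k) ≤ 0 :=
              mul_nonpos_of_nonneg_of_nonpos (sq_nonneg A) hL0
            have hge : (0:ℝ) ≤ (aN+1)^2 * (|L|+1) := by positivity
            linarith
          · calc A^2 * lap φ (z k) ≤ A^2 * (|L|+1) :=
                mul_le_mul_of_nonneg_left h4.le (sq_nonneg A)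
              _ ≤ (aN+1)^2 * (|L|+1) := mul_le_mul_of_nonneg_right hsq habs.le
        nlinarith
    · -- gradient bound
      by_cases hxD : x ∈ interior D
      · have hchi : chi (interior D) x = 1 := by
          simp [chi, Set.indicator_of_mem hxD]
        rw [hchi]
        by_contra hless
        push_neg at hless
        have hc : 0 < Filter.liminf g (𝓝[Ω] x) := hnondeg x hxD
        set c := Filter.liminf g (𝓝[Ω] x) with hcdef
        obtain ⟨U, hUo, hxU, hUlim⟩ := liminf_lsc hgge hgle hx
          (show c/2 < Filter.liminf g (𝓝[Ω] x) by rw [← hcdef]; linarith)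
        have e7 : ∀ᶠ k in atTop, z k ∈ U := hztend (hUo.mem_nhds hxU)
        set b := (aN + 1)/2 with hbdef
        have haN0 : 0 ≤ aN := by rw [haNdef]; positivity
        have hb0 : 0 < b := by rw [hbdef]; linarith
        have hb1 : b < 1 := by rw [hbdef]; linarith
        have e8 : ∀ᶠ k in atTop, ‖gradient φ (z k)‖ < b :=
          haz.eventually (eventually_lt_nhds (by rw [hbdef]; linarith))
        have e9 : ∀ᶠ k in atTop,
            (p k - 2) * b ^ (p k - 4) * (|I|+1) + b ^ (p k - 4) * (|L|+1) < c/2 := by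
          have := (key_decay hb0 hb1 (|I|+1) (|L|+1)).comp hp
          exact this.eventually (eventually_lt_nhds (by linarith))
        have e10 : ∀ᶠ k in atTop, infLap φ (z k) < |I| + 1 :=
          hIz.eventually (eventually_lt_nhds (by linarith [le_abs_self I]))
        have e11 : ∀ᶠ k in atTop, lap φ (z k) < |L| + 1 :=
          hLz.eventually (eventually_lt_nhds (by linarith [le_abs_self L]))
        obtain ⟨k, h1, h7, h8, h9, h10, h11⟩ :=
          (hev1.and (e7.and (e8.and (e9.and (e10.and e11))))).exists
        have hlim := hkey k h1
        have hclim : c/2 ≤ Filter.liminf g (𝓝[Ω] (z k)) :=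
          hUlim (z k) ⟨h7, hzΩ k⟩
        set A := ‖gradient φ (z k)‖ with hAdef
        have hA0 : 0 ≤ A := hAdef ▸ norm_nonneg _
        clear_value A
        have hp2 : 0 < p k - 2 := by linarith [hp4 k]
        have hp4' : 0 ≤ p k - 4 := by linarith [hp4 k]
        set T := (p k - 2) * infLap φ (z k) + A^2 * lap φ (z k) with hTdef
        have hpl : pLap (p k) φ (z k) = A ^ (p k - 4) * T := by
          rw [pLap, ← hAdef, ← hTdef]
        clear_value T
        rcases le_or_gt T 0 with hT | hT
        · have : pLap (p k) φ (z k) ≤ 0 := by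
            rw [hpl]
            exact mul_nonpos_of_nonneg_of_nonpos (Real.rpow_nonneg hA0 _) hT
          linarith
        · have hAb : A ^ (p k - 4) ≤ b ^ (p k - 4) :=
            Real.rpow_le_rpow hA0 h8.le hp4'
          have hTb : T ≤ (p k - 2) * (|I|+1) + (|L|+1) := by
            have hi1 : (p k - 2) * infLap φ (z k) ≤ (p k - 2) * (|I|+1) :=
              mul_le_mul_of_nonneg_left h10.le hp2.le
            have hi2 : A^2 * lap φ (z k) ≤ |L| + 1 := by
              have hsq : A^2 ≤ 1 := by nlinarith
              have habs : (0:ℝ) < |L| + 1 := by positivity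
              rcases le_or_gt (lap φ (z k)) 0 with hL0 | hL0
              · have hle : A^2 * lap φ (z k) ≤ 0 :=
                  mul_nonpos_of_nonneg_of_nonpos (sq_nonneg A) hL0
                linarith
              · calc A^2 * lap φ (z k) ≤ A^2 * (|L|+1) :=
                    mul_le_mul_of_nonneg_left h11.le (sq_nonneg A)
                  _ ≤ 1 * (|L|+1) := mul_le_mul_of_nonneg_right hsq habs.le
                  _ = |L| + 1 := one_mul _
            linarith
          have hfin : pLap (p k) φ (z k)
              ≤ (p k - 2) * b ^ (p k - 4) * (|I|+1) + b ^ (p k - 4) * (|L|+1) := by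
            rw [hpl]
            calc A ^ (p k - 4) * T ≤ b ^ (p k - 4) * T :=
                  mul_le_mul_of_nonneg_right hAb hT.le
              _ ≤ b ^ (p k - 4) * ((p k - 2) * (|I|+1) + (|L|+1)) :=
                  mul_le_mul_of_nonneg_left hTb (Real.rpow_nonneg hb0.le _)
              _ = (p k - 2) * b ^ (p k - 4) * (|I|+1) + b ^ (p k - 4) * (|L|+1) := by ring
          linarith
      · have hchi : chi (interior D) x = 0 := by
          simp [chi, Set.indicator_of_notMem hxD]
        rw [hchi, haNdef]
        exact norm_nonneg _
  · -- supersolution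
    intro x hx φ hφ hsm
    obtain ⟨s, hs, hsmin⟩ := hsm
    have hxs : x ∈ Ω ∩ ball x s := ⟨hx, mem_ball_self hs⟩
    obtain ⟨r0, hr0, hball0⟩ := Metric.isOpen_iff.mp (hΩo.inter isOpen_ball) x hxs
    set r := r0/2 with hrdef
    have hr : 0 < r := by positivity
    have hball : closedBall x r ⊆ Ω ∩ ball x s :=
      (closedBall_subset_ball (by simp [hrdef]; linarith)).trans hball0
    have hballΩ : closedBall x r ⊆ Ω := hball.trans inter_subset_left
    have hmin' : ∀ y ∈ closedBall x r, y ≠ x → uinf x - φ x < uinf y - φ y := by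
      intro y hy hne
      exact hsmin y ⟨(hball hy).2, (hball hy).1⟩ hne
    obtain ⟨z, hz, hztend⟩ := exists_min_seq hucont hconv
      (hφ.continuousOn) hr hballΩ hmin'
    have hzΩ : ∀ k, z k ∈ Ω := fun k => hballΩ (hz k).1
    have hkey : ∀ k, z k ∈ ball x r →
        pLap (p k) φ (z k) ≤ Filter.limsup g (𝓝[Ω] (z k)) := by
      intro k hzk
      set a := z k with hadef
      have haΩ : a ∈ Ω := hzΩ k
      have hφk : ContDiffOn ℝ 2 (fun y => φ y + (-1) * quart a y) Ω :=
        hφ.add ((contDiff_const.mul (quart_contDiff a)).contDiffOn)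
      have hstrict : IsStrictLocalMinOn (fun y => u k y - (φ y + (-1) * quart a y)) Ω a := by
        refine ⟨r - dist a x, by simpa using mem_ball.mp hzk, ?_⟩
        intro y hy hne
        have hyball : y ∈ closedBall x r := by
          have ht := dist_triangle y a x
          have hy1 : dist y a < r - dist a x := mem_ball.mp hy.1
          exact mem_closedBall.mpr (by linarith)
        have h1 : u k a - φ a ≤ u k y - φ y := (hz k).2 y hyball
        have h2 : 0 < quart a y := by
          have hny : (0:ℝ) < ‖y - a‖ := norm_pos_iff.mpr (sub_ne_zero.mpr hne)
          rw [quart, real_inner_self_eq_norm_sq]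
          positivity
        have h3 : quart a a = 0 := by simp [quart]
        simp only [h3]
        linarith
      have hvisc := (husol k).2.2 a haΩ _ hφk hstrict
      rwa [(perturb_pLap hΩo hφ haΩ (-1) (p k)).1] at hvisc
    have hgz : Tendsto (fun k => gradient φ (z k)) atTop (𝓝 (gradient φ x)) :=
      (((grad_continuousOn hΩo hφ).continuousAt (hΩo.mem_nhds hx)).tendsto).comp hztend
    have haz : Tendsto (fun k => ‖gradient φ (z k)‖) atTop (𝓝 ‖gradient φ x‖) :=
      hgz.norm
    have hIz : Tendsto (fun k => infLap φ (z k)) atTop (𝓝 (infLap φ x)) :=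
      (((infLap_continuousOn hΩo hφ).continuousAt (hΩo.mem_nhds hx)).tendsto).comp hztend
    have hLz : Tendsto (fun k => lap φ (z k)) atTop (𝓝 (lap φ x)) :=
      (((lap_continuousOn hΩo hφ).continuousAt (hΩo.mem_nhds hx)).tendsto).comp hztend
    have hev1 : ∀ᶠ k in atTop, z k ∈ ball x r :=
      hztend (isOpen_ball.mem_nhds (mem_ball_self hr))
    set I := infLap φ x with hIdef
    set L := lap φ x with hLdef
    set aN := ‖gradient φ x‖ with haNdef
    clear_value I L aN
    have haN0 : 0 ≤ aN := by rw [haNdef]; positivity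
    by_cases hI : I ≤ 0
    · exact Or.inl hI
    push_neg at hI
    right
    by_cases hxD : x ∈ closure D
    · have hchi : chi (closure D) x = 1 := by
        simp [chi, Set.indicator_of_mem hxD]
      rw [hchi]
      by_contra hgt
      push_neg at hgt
      set b := (aN + 1)/2 with hbdef
      have hb1 : 1 < b := by rw [hbdef]; linarith
      have hbaN : b < aN := by rw [hbdef]; linarith
      have e2 : ∀ᶠ k in atTop, b < ‖gradient φ (z k)‖ :=
        haz.eventually (eventually_gt_nhds hbaN)
      have e3 : ∀ᶠ k in atTop, I/2 < infLap φ (z k) :=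
        hIz.eventually (eventually_gt_nhds (by linarith))
      have e4 : ∀ᶠ k in atTop, -(|L| + 1) < lap φ (z k) :=
        hLz.eventually (eventually_gt_nhds (by linarith [neg_abs_le L]))
      have e5 : ∀ᶠ k in atTop, ‖gradient φ (z k)‖ < aN + 1 :=
        haz.eventually (eventually_lt_nhds (by linarith))
      have hpc : Tendsto (fun k => (p k - 2) * (I/2)) atTop atTop :=
        (tendsto_atTop_add_const_right atTop (-2) hp).atTop_mul_const (by linarith)
      have e6 : ∀ᶠ k in atTop,
          (aN+1)^2 * (|L|+1) + M + 1 < (p k - 2) * (I/2) :=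
        hpc.eventually_gt_atTop _
      obtain ⟨k, h1, h2, h3, h4, h5, h6⟩ :=
        (hev1.and (e2.and (e3.and (e4.and (e5.and e6))))).exists
      have hlim := hkey k h1
      have hMlim : Filter.limsup g (𝓝[Ω] (z k)) ≤ M := limsup_g_le hgge hgle (hzΩ k)
      set A := ‖gradient φ (z k)‖ with hAdef
      have hA0 : 0 ≤ A := by rw [hAdef]; positivity
      clear_value A
      have hp2 : 0 < p k - 2 := by linarith [hp4 k]
      have hp4' : 0 ≤ p k - 4 := by linarith [hp4 k]
      set T := (p k - 2) * infLap φ (z k) + A^2 * lap φ (z k) with hTdef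
      have hpl : pLap (p k) φ (z k) = A ^ (p k - 4) * T := by
        rw [pLap, ← hAdef, ← hTdef]
      clear_value T
      have hT1 : (p k - 2) * (I/2) ≤ (p k - 2) * infLap φ (z k) :=
        mul_le_mul_of_nonneg_left h3.le hp2.le
      have hT2 : -((aN+1)^2 * (|L|+1)) ≤ A^2 * lap φ (z k) := by
        have hsq : A^2 ≤ (aN+1)^2 := by nlinarith
        have habs : (0:ℝ) < |L| + 1 := by positivity
        rcases le_or_gt 0 (lap φ (z k)) with hL0 | hL0
        · have hge : 0 ≤ A^2 * lap φ (z k) := mul_nonneg (sq_nonneg A) hL0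
          have : (0:ℝ) ≤ (aN+1)^2 * (|L|+1) := by positivity
          linarith
        · have hstep : A^2 * (-(|L|+1)) ≤ A^2 * lap φ (z k) :=
            mul_le_mul_of_nonneg_left h4.le (sq_nonneg A)
          have hstep2 : (aN+1)^2 * (-(|L|+1)) ≤ A^2 * (-(|L|+1)) := by nlinarith
          linarith
      have hT : M + 1 ≤ T := by rw [hTdef]; linarith
      have hA1 : 1 ≤ A ^ (p k - 4) :=
        Real.one_le_rpow (by linarith) hp4'
      have hfin : T ≤ A ^ (p k - 4) * T :=
        le_mul_of_one_le_left (by linarith) hA1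
      rw [hpl] at hlim
      linarith
    · have hchi : chi (closure D) x = 0 := by
        simp [chi, Set.indicator_of_notMem hxD]
      rw [hchi]
      by_contra hgt
      push_neg at hgt
      have hxD' : x ∉ closure {w ∈ Ω | 0 < g w} := by rw [← hDdef]; exact hxD
      have hgz0 : ∀ y ∈ Ω, y ∉ closure ({w ∈ Ω | 0 < g w}) → g y ≤ 0 := by
        intro y hy hyn
        by_contra hpos
        push_neg at hpos
        exact hyn (subset_closure ⟨hy, hpos⟩)
      have hUlim := limsup_zero_near (M := M) hgge hgz0 hxD'
      have e7 : ∀ᶠ k in atTop, z k ∈ (closure ({w ∈ Ω | 0 < g w}))ᶜ :=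
        hztend (isClosed_closure.isOpen_compl.mem_nhds hxD')
      have e2 : ∀ᶠ k in atTop, aN/2 < ‖gradient φ (z k)‖ :=
        haz.eventually (eventually_gt_nhds (by linarith))
      have e3 : ∀ᶠ k in atTop, I/2 < infLap φ (z k) :=
        hIz.eventually (eventually_gt_nhds (by linarith))
      have e4 : ∀ᶠ k in atTop, -(|L| + 1) < lap φ (z k) :=
        hLz.eventually (eventually_gt_nhds (by linarith [neg_abs_le L]))
      have e5 : ∀ᶠ k in atTop, ‖gradient φ (z k)‖ < aN + 1 :=
        haz.eventually (eventually_lt_nhds (by linarith))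
      have hpc : Tendsto (fun k => (p k - 2) * (I/2)) atTop atTop :=
        (tendsto_atTop_add_const_right atTop (-2) hp).atTop_mul_const (by linarith)
      have e6 : ∀ᶠ k in atTop,
          (aN+1)^2 * (|L|+1) + 1 < (p k - 2) * (I/2) :=
        hpc.eventually_gt_atTop _
      obtain ⟨k, h1, h7, h2, h3, h4, h5, h6⟩ :=
        (hev1.and (e7.and (e2.and (e3.and (e4.and (e5.and e6)))))).exists
      have hlim := hkey k h1
      have h0lim : Filter.limsup g (𝓝[Ω] (z k)) ≤ 0 := hUlim (z k) ⟨h7, hzΩ k⟩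
      set A := ‖gradient φ (z k)‖ with hAdef
      have hA0 : 0 < A := by linarith
      clear_value A
      have hp2 : 0 < p k - 2 := by linarith [hp4 k]
      set T := (p k - 2) * infLap φ (z k) + A^2 * lap φ (z k) with hTdef
      have hpl : pLap (p k) φ (z k) = A ^ (p k - 4) * T := by
        rw [pLap, ← hAdef, ← hTdef]
      clear_value T
      have hT1 : (p k - 2) * (I/2) ≤ (p k - 2) * infLap φ (z k) :=
        mul_le_mul_of_nonneg_left h3.le hp2.le
      have hT2 : -((aN+1)^2 * (|L|+1)) ≤ A^2 * lap φ (z k) := by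
        have hsq : A^2 ≤ (aN+1)^2 := by nlinarith
        have habs : (0:ℝ) < |L| + 1 := by positivity
        rcases le_or_gt 0 (lap φ (z k)) with hL0 | hL0
        · have hge : 0 ≤ A^2 * lap φ (z k) := mul_nonneg (sq_nonneg A) hL0
          have : (0:ℝ) ≤ (aN+1)^2 * (|L|+1) := by positivity
          linarith
        · have hstep : A^2 * (-(|L|+1)) ≤ A^2 * lap φ (z k) :=
            mul_le_mul_of_nonneg_left h4.le (sq_nonneg A)
          have hstep2 : (aN+1)^2 * (-(|L|+1)) ≤ A^2 * (-(|L|+1)) := by nlinarith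
          linarith
      have hT : 0 < T := by rw [hTdef]; linarith
      have hrp : 0 < A ^ (p k - 4) := Real.rpow_pos_of_pos hA0 _
      have : 0 < pLap (p k) φ (z k) := by rw [hpl]; exact mul_pos hrp hT
      linarith

  · -- boundary values
    intro x hxf
    have hxcl : x ∈ closure Ω := frontier_subset_closure hxf
    have h1 : Tendsto (fun k => u k x) atTop (𝓝 (uinf x)) := hconv.tendsto_at hxcl
    have h2 : (fun k => u k x) = fun _ => f x := funext fun k => hubdry k x hxf
    rw [h2] at h1
    exact tendsto_nhds_unique h1 tendsto_const_nhds

end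
end

section
/- Suppose that int D = ∅ and that f : ∂Ω → ℝ is Lipschitz continuous with Lipschitz constant L ≤ 1. Let α ∈ [L, 1] and let v ∈ C(cl Ω) satisfy: v is infinity harmonic in Ω \ cl D, v = f on ∂Ω, and v(x) = sup_{y ∈ ∂Ω} ( f(y) − α|x − y| ) for every x ∈ cl D. Then v is a solution of the gradient constraint problem (GC) for the data (Ω, D, f). -/
open Metric Set Filter MeasureTheory
open scoped Topology RealInnerProductSpace NNReal

noncomputable section

variable {n : ℕ}

local notation "E" => EuclideanSpace ℝ (Fin n)

lemma hasFDerivAt_normSub (y z : E) (h : z ≠ y) :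
    HasFDerivAt (fun w => ‖w - y‖) (‖z - y‖⁻¹ • innerSL ℝ (z - y)) z := by
  have hr : (0:ℝ) < ‖z - y‖ := by
    rw [norm_pos_iff]; exact sub_ne_zero.mpr h
  have hsub : HasFDerivAt (fun w : E => w - y) (ContinuousLinearMap.id ℝ E) z :=
    (hasFDerivAt_id z).sub_const y
  have hQ : HasFDerivAt (fun w : E => ⟪w - y, w - y⟫) ((2:ℝ) • innerSL ℝ (z - y)) z := by
    have := hsub.inner ℝ hsub
    refine this.congr_fderiv ?_
    ext w
    simp [fderivInnerCLM, real_inner_comm]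
    rw [← inner_sub_left, real_inner_comm w (z - y)]; ring
  have hsq : HasDerivAt Real.sqrt (1 / (2 * Real.sqrt (⟪z - y, z - y⟫))) (⟪z - y, z - y⟫) := by
    apply Real.hasDerivAt_sqrt
    rw [real_inner_self_eq_norm_mul_norm]
    exact (mul_pos hr hr).ne'
  have hcomp := hsq.comp_hasFDerivAt z hQ
  have hval : Real.sqrt (⟪z - y, z - y⟫) = ‖z - y‖ := by
    rw [real_inner_self_eq_norm_mul_norm, Real.sqrt_mul_self (norm_nonneg _)]
  have heq : (fun w : E => Real.sqrt (⟪w - y, w - y⟫)) = fun w => ‖w - y‖ := by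
    funext w
    rw [real_inner_self_eq_norm_mul_norm, Real.sqrt_mul_self (norm_nonneg _)]
  rw [Function.comp_def, heq] at hcomp
  refine hcomp.congr_fderiv ?_
  rw [hval, smul_smul]
  congr 1
  field_simp

lemma hasFDerivAt_normSubSq (y z : E) :
    HasFDerivAt (fun w : E => ‖w - y‖^2) ((2:ℝ) • innerSL ℝ (z - y)) z := by
  have hsub : HasFDerivAt (fun w : E => w - y) (ContinuousLinearMap.id ℝ E) z :=
    (hasFDerivAt_id z).sub_const y
  have := hsub.inner ℝ hsub
  have heq : (fun w : E => ‖w - y‖^2) = fun w : E => ⟪w - y, w - y⟫ := by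
    funext w; rw [real_inner_self_eq_norm_sq]
  rw [heq]
  refine this.congr_fderiv ?_
  ext w
  simp [fderivInnerCLM, real_inner_comm]
  rw [← inner_sub_left, real_inner_comm w (z - y)]; ring

lemma gradient_testFn (y z₀ : E) (c a b e : ℝ) (z : E) (h : z ≠ y) :
    HasGradientAt (fun z => c + a*‖z-y‖ + b*‖z-y‖^2 + e*‖z-z₀‖^2)
      ((a * ‖z-y‖⁻¹ + 2*b) • (z-y) + (2*e) • (z-z₀)) z := by
  have h1 := ((hasFDerivAt_normSub y z h).const_mul a).const_add c
  have h2 := (hasFDerivAt_normSubSq y z).const_mul b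
  have h3 := (hasFDerivAt_normSubSq z₀ z).const_mul e
  have := (h1.add h2).add h3
  rw [hasGradientAt_iff_hasFDerivAt]
  refine this.congr_fderiv ?_
  ext w
  simp [InnerProductSpace.toDual_apply_apply, inner_add_left, real_inner_smul_left, real_inner_smul_right]
  ring

lemma infLap_testFn (y z' : E) (c a b e : ℝ) (h : z' ≠ y) :
    infLap (fun z => c + a*‖z-y‖ + b*‖z-y‖^2 + e*‖z-z'‖^2) z'
      = (a + 2*b*‖z'-y‖)^2 * (2*b + 2*e) := by
  set r : ℝ := ‖z' - y‖ with hrdef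
  have hr : (0:ℝ) < r := by rw [hrdef, norm_pos_iff]; exact sub_ne_zero.mpr h
  set u : E := z' - y with hudef
  set φ : E → ℝ := fun z => c + a*‖z-y‖ + b*‖z-y‖^2 + e*‖z-z'‖^2 with hφ
  set VF : E → E := fun z => (a * ‖z-y‖⁻¹ + 2*b) • (z-y) + (2*e) • (z-z') with hVF
  have hev : gradient φ =ᶠ[𝓝 z'] VF := by
    have hopen : IsOpen {z : E | z ≠ y} := isOpen_compl_singleton
    filter_upwards [hopen.mem_nhds (by exact h)] with z hz
    exact (gradient_testFn y z' c a b e z hz).gradient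
  have hgz : gradient φ z' = (a * r⁻¹ + 2*b) • u := by
    have := (gradient_testFn y z' c a b e z' h).gradient
    rw [this, sub_self, smul_zero, add_zero]
  -- derivative of VF at z'
  have hN := hasFDerivAt_normSub y z' h
  have hinv : HasDerivAt (fun t : ℝ => t⁻¹) (-1 / r^2) r := by
    simpa [neg_div] using hasDerivAt_inv hr.ne'
  have hninv : HasFDerivAt (fun z : E => ‖z - y‖⁻¹) ((-1/r^2) • (r⁻¹ • innerSL ℝ u)) z' :=
    hinv.comp_hasFDerivAt z' hN
  have hs : HasFDerivAt (fun z : E => a * ‖z - y‖⁻¹ + 2*b)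
      (a • ((-1/r^2) • (r⁻¹ • innerSL ℝ u))) z' := (hninv.const_mul a).add_const (2*b)
  have hsub : HasFDerivAt (fun z : E => z - y) (ContinuousLinearMap.id ℝ E) z' :=
    (hasFDerivAt_id z').sub_const y
  have ht1 := hs.smul hsub
  have ht2 : HasFDerivAt (fun z : E => (2*e) • (z - z'))
      ((2*e) • ContinuousLinearMap.id ℝ E) z' := by
    have := HasFDerivAt.const_smul (𝕜 := ℝ) (R := ℝ) ((hasFDerivAt_id z').sub_const z') (2*e)
    exact this
  have hA := ht1.add ht2
  have hfd : fderiv ℝ (gradient φ) z' = fderiv ℝ VF z' := hev.fderiv_eq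
  rw [infLap, hfd, (show HasFDerivAt VF _ z' from hA).fderiv, hgz]
  simp only [ContinuousLinearMap.add_apply, ContinuousLinearMap.smul_apply,
    ContinuousLinearMap.coe_smul', Pi.smul_apply, ContinuousLinearMap.smulRight_apply,
    ContinuousLinearMap.id_apply, coe_innerSL_apply, innerSL_apply_apply]
  simp only [inner_add_left, real_inner_smul_left, real_inner_smul_right]
  rw [show ⟪u, u⟫ = r^2 by rw [real_inner_self_eq_norm_sq, ← hrdef]]
  simp only [smul_eq_mul]
  rw [show ‖z' - y‖ = r from rfl]
  field_simp
  ring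



lemma contDiffOn_testFn (y z₀ : E) (c a b e : ℝ) (s : Set E) (hs : ∀ z ∈ s, z ≠ y) :
    ContDiffOn ℝ 2 (fun z => c + a*‖z-y‖ + b*‖z-y‖^2 + e*‖z-z₀‖^2) s := by
  intro z hz
  apply ContDiffAt.contDiffWithinAt
  have hid : ContDiffAt ℝ 2 (fun z : E => z - y) z :=
    (contDiff_id.sub contDiff_const).contDiffAt
  have h1 : ContDiffAt ℝ 2 (fun z : E => ‖z - y‖) z :=
    ContDiffAt.norm ℝ hid (sub_ne_zero.mpr (hs z hz))
  have h2 : ContDiffAt ℝ 2 (fun z : E => ‖z - y‖^2) z := ContDiffAt.norm_sq ℝ hid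
  have h3 : ContDiffAt ℝ 2 (fun z : E => ‖z - z₀‖^2) z :=
    ContDiffAt.norm_sq ℝ (contDiff_id.sub contDiff_const).contDiffAt
  exact ((contDiffAt_const.add (contDiffAt_const.mul h1)).add
    (contDiffAt_const.mul h2)).add (contDiffAt_const.mul h3)

lemma gradient_norm_le_of_upper (α : ℝ) (hα : 0 ≤ α) (φ : E → ℝ) (x : E)
    (hd : DifferentiableAt ℝ φ x) (r : ℝ) (hr : 0 < r)
    (hb : ∀ z ∈ ball x r, φ z - φ x ≤ α * ‖z - x‖) : ‖gradient φ x‖ ≤ α := by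
  by_cases hp : gradient φ x = 0
  · simp [hp, hα]
  set p := gradient φ x with hpdef
  have hpn : (0:ℝ) < ‖p‖ := norm_pos_iff.mpr hp
  have hline : HasDerivAt (fun t : ℝ => x + t • p) p 0 := by
    simpa using ((hasDerivAt_id (0:ℝ)).smul_const p).const_add x
  have hg : HasDerivAt (fun t : ℝ => φ (x + t • p)) ⟪p, p⟫ 0 := by
    have hF : HasFDerivAt φ (fderiv ℝ φ x) ((fun t : ℝ => x + t • p) 0) := by
      simpa using hd.hasFDerivAt
    have h0 := hF.comp_hasDerivAt 0 hline
    refine h0.congr_deriv ?_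
    have h1 : fderiv ℝ φ x = InnerProductSpace.toDual ℝ _ p := by
      rw [hpdef]
      exact ((InnerProductSpace.toDual ℝ _).apply_symm_apply _).symm
    rw [h1, InnerProductSpace.toDual_apply_apply]
  have hslope : Tendsto (fun t : ℝ => (φ (x + t • p) - φ x)/t) (𝓝[>] 0) (𝓝 ⟪p, p⟫) := by
    have h2 := hasDerivAt_iff_tendsto_slope.mp hg
    have h3 := h2.mono_left (nhdsWithin_mono 0 (fun t (ht : t ∈ Ioi (0:ℝ)) => ne_of_gt ht))
    refine h3.congr (fun t => ?_)
    simp only [slope_fun_def, vsub_eq_sub, smul_eq_mul, sub_zero, zero_smul, add_zero]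
    ring
  have hub : ∀ᶠ t in 𝓝[>] (0:ℝ), (φ (x + t • p) - φ x)/t ≤ α * ‖p‖ := by
    have hrp : 0 < r / ‖p‖ := div_pos hr hpn
    filter_upwards [Ioo_mem_nhdsGT_of_mem (⟨le_rfl, hrp⟩ : (0:ℝ) ∈ Ico 0 (r/‖p‖))] with t ht
    obtain ⟨ht0, htr⟩ := ht
    have hmem : x + t • p ∈ ball x r := by
      rw [mem_ball, dist_eq_norm]
      simp only [add_sub_cancel_left, norm_smul, Real.norm_eq_abs, abs_of_pos ht0]
      calc t * ‖p‖ < (r/‖p‖) * ‖p‖ := by exact mul_lt_mul_of_pos_right htr hpn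
      _ = r := by field_simp
    have := hb _ hmem
    rw [div_le_iff₀ ht0]
    calc φ (x + t • p) - φ x ≤ α * ‖x + t • p - x‖ := this
    _ = α * ‖p‖ * t := by
        simp only [add_sub_cancel_left, norm_smul, Real.norm_eq_abs, abs_of_pos ht0]; ring
  have hfin : ⟪p, p⟫ ≤ α * ‖p‖ := le_of_tendsto hslope hub
  rw [real_inner_self_eq_norm_sq] at hfin
  by_contra hcon
  push_neg at hcon
  nlinarith [mul_lt_mul_of_pos_right hcon hpn]

lemma second_deriv_nonpos_of_localmax {g G1 : ℝ → ℝ} {K : ℝ}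
    (hmax : ∀ᶠ t in 𝓝 (0:ℝ), g t ≤ g 0)
    (hg : ∀ᶠ t in 𝓝 (0:ℝ), HasDerivAt g (G1 t) t)
    (hG : HasDerivAt G1 K 0) : K ≤ 0 := by
  by_contra hK
  push_neg at hK
  have hg0 : HasDerivAt g (G1 0) 0 := hg.self_of_nhds
  have hG10 : G1 0 = 0 := IsLocalMax.hasDerivAt_eq_zero hmax hg0
  have hslope : Tendsto (fun t : ℝ => G1 t / t) (𝓝[>] 0) (𝓝 K) := by
    have h2 := hasDerivAt_iff_tendsto_slope.mp hG
    have h3 := h2.mono_left (nhdsWithin_mono 0 (fun t (ht : t ∈ Ioi (0:ℝ)) => ne_of_gt ht))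
    refine h3.congr (fun t => ?_)
    simp only [slope_fun_def, vsub_eq_sub, smul_eq_mul, hG10, sub_zero]
    ring
  have hpos : ∀ᶠ t in 𝓝[>] (0:ℝ), 0 < G1 t := by
    have h4 : ∀ᶠ t in 𝓝[>] (0:ℝ), 0 < G1 t / t := hslope.eventually (eventually_gt_nhds hK)
    filter_upwards [h4, self_mem_nhdsWithin] with t ht1 ht2
    have ht : (0:ℝ) < t := ht2
    have h5 := mul_pos ht1 ht
    rwa [div_mul_cancel₀ _ (ne_of_gt ht)] at h5
  rw [eventually_nhdsWithin_iff] at hpos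
  rw [Metric.eventually_nhds_iff] at hpos hg hmax
  obtain ⟨ε1, hε1, h1⟩ := hpos
  obtain ⟨ε2, hε2, h2⟩ := hg
  obtain ⟨ε3, hε3, h3⟩ := hmax
  set τ := min (min ε1 ε2) ε3 / 2 with hτdef
  have hτ : 0 < τ := by positivity
  have hτ1 : τ < ε1 := by
    apply lt_of_lt_of_le (half_lt_self (by positivity))
    exact le_trans (min_le_left _ _) (min_le_left _ _)
  have hτ2 : τ < ε2 := by
    apply lt_of_lt_of_le (half_lt_self (by positivity))
    exact le_trans (min_le_left _ _) (min_le_right _ _)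
  have hτ3 : τ < ε3 := by
    apply lt_of_lt_of_le (half_lt_self (by positivity))
    exact min_le_right _ _
  have hmono : StrictMonoOn g (Icc 0 τ) := by
    apply strictMonoOn_of_deriv_pos (convex_Icc 0 τ)
    · intro t ht
      have : dist t 0 < ε2 := by
        rw [Real.dist_eq, sub_zero, abs_of_nonneg ht.1]
        exact lt_of_le_of_lt ht.2 hτ2
      exact (h2 this).continuousAt.continuousWithinAt
    · intro t ht
      rw [interior_Icc] at ht
      have hd2 : dist t 0 < ε2 := by
        rw [Real.dist_eq, sub_zero, abs_of_pos ht.1]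
        exact lt_trans ht.2 hτ2
      rw [(h2 hd2).deriv]
      apply h1
      · rw [Real.dist_eq, sub_zero, abs_of_pos ht.1]
        exact lt_trans ht.2 hτ1
      · exact ht.1
  have hlt : g 0 < g τ :=
    hmono (⟨le_rfl, hτ.le⟩ : (0:ℝ) ∈ Icc 0 τ) (⟨hτ.le, le_rfl⟩ : τ ∈ Icc 0 τ) hτ
  have : g τ ≤ g 0 := h3 (by rw [Real.dist_eq, sub_zero, abs_of_pos hτ]; exact hτ3)
  linarith


lemma differentiableAt_gradient_of_contDiffAt {φ : E → ℝ} {x : E} (h : ContDiffAt ℝ 2 φ x) :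
    DifferentiableAt ℝ (gradient φ) x := by
  have h1 : ContDiffAt ℝ 1 (fderiv ℝ φ) x := h.fderiv_right (by norm_num)
  have h2 : DifferentiableAt ℝ (fderiv ℝ φ) x := h1.differentiableAt (by norm_num)
  have h3 : gradient φ = fun w => (InnerProductSpace.toDual ℝ _).symm (fderiv ℝ φ w) := rfl
  rw [h3]
  exact ((InnerProductSpace.toDual ℝ _).symm.toContinuousLinearEquiv.differentiableAt).comp x h2

lemma gradient_sub' {C φ : E → ℝ} {z : E} (hC : DifferentiableAt ℝ C z)
    (hφ : DifferentiableAt ℝ φ z) :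
    gradient (fun w => C w - φ w) z = gradient C z - gradient φ z := by
  unfold gradient
  rw [fderiv_fun_sub hC hφ, map_sub]

lemma hasGradientAt_cone (y : E) (κ a : ℝ) (z : E) (h : z ≠ y) :
    HasGradientAt (fun w => κ + a * ‖w - y‖) ((a * ‖z - y‖⁻¹) • (z - y)) z := by
  have h1 := ((hasFDerivAt_normSub y z h).const_mul a).const_add κ
  rw [hasGradientAt_iff_hasFDerivAt]
  refine h1.congr_fderiv ?_
  ext w
  simp [InnerProductSpace.toDual_apply_apply, real_inner_smul_left]
  ring

lemma cone_hessian (y x : E) (h : x ≠ y) (a : ℝ) :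
    ∃ B : E →L[ℝ] E, HasFDerivAt (fun w : E => (a * ‖w - y‖⁻¹) • (w - y)) B x ∧
      ⟪B ((a * ‖x - y‖⁻¹) • (x - y)), ((a * ‖x - y‖⁻¹) • (x - y))⟫ = 0 := by
  set r : ℝ := ‖x - y‖ with hrdef
  have hr : (0:ℝ) < r := by rw [hrdef, norm_pos_iff]; exact sub_ne_zero.mpr h
  set u : E := x - y with hudef
  have hN := hasFDerivAt_normSub y x h
  have hinv : HasDerivAt (fun t : ℝ => t⁻¹) (-1 / r^2) r := by
    simpa [neg_div] using hasDerivAt_inv hr.ne'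
  have hninv : HasFDerivAt (fun z : E => ‖z - y‖⁻¹) ((-1/r^2) • (r⁻¹ • innerSL ℝ u)) x :=
    hinv.comp_hasFDerivAt x hN
  have hs : HasFDerivAt (fun z : E => a * ‖z - y‖⁻¹)
      (a • ((-1/r^2) • (r⁻¹ • innerSL ℝ u))) x := hninv.const_mul a
  have hsub : HasFDerivAt (fun z : E => z - y) (ContinuousLinearMap.id ℝ E) x :=
    (hasFDerivAt_id x).sub_const y
  have hB := hs.smul hsub
  refine ⟨_, hB, ?_⟩
  simp only [ContinuousLinearMap.add_apply, ContinuousLinearMap.smul_apply,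
    ContinuousLinearMap.coe_smul', Pi.smul_apply, ContinuousLinearMap.smulRight_apply,
    ContinuousLinearMap.id_apply, coe_innerSL_apply, innerSL_apply_apply]
  simp only [inner_add_left, real_inner_smul_left, real_inner_smul_right, smul_eq_mul]
  rw [show ⟪u, u⟫ = r^2 by rw [real_inner_self_eq_norm_sq, ← hrdef]]
  rw [show ‖x - y‖ = r from rfl]
  field_simp
  ring

lemma infLap_nonneg_of_cone_touch (y₀ x : E) (κ a ρ : ℝ) (hρ : 0 < ρ)
    (hρy : ∀ z ∈ ball x ρ, z ≠ y₀)
    (φ : E → ℝ) (hφ : ∀ z ∈ ball x ρ, ContDiffAt ℝ 2 φ z)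
    (hmax : ∀ z ∈ ball x ρ, (κ + a * ‖z - y₀‖) - φ z ≤ (κ + a * ‖x - y₀‖) - φ x) :
    0 ≤ infLap φ x := by
  have hx : x ∈ ball x ρ := mem_ball_self hρ
  have hxy : x ≠ y₀ := hρy x hx
  set C : E → ℝ := fun w => κ + a * ‖w - y₀‖ with hC
  set VF : E → E := fun w => (a * ‖w - y₀‖⁻¹) • (w - y₀) with hVF
  set ψ : E → ℝ := fun w => C w - φ w with hψ
  have hgC : ∀ z ∈ ball x ρ, HasGradientAt C (VF z) z := fun z hz =>
    hasGradientAt_cone y₀ κ a z (hρy z hz)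
  have hdφ : ∀ z ∈ ball x ρ, DifferentiableAt ℝ φ z := fun z hz =>
    ((hφ z hz).differentiableAt (by norm_num))
  have hlocmax : IsLocalMax ψ x := by
    filter_upwards [isOpen_ball.mem_nhds hx] with z hz
    exact hmax z hz
  -- first-order condition
  have hdψx : fderiv ℝ ψ x = 0 := hlocmax.fderiv_eq_zero
  have hfds : fderiv ℝ ψ x = fderiv ℝ C x - fderiv ℝ φ x :=
    fderiv_fun_sub (hgC x hx).hasFDerivAt.differentiableAt (hdφ x hx)
  have hfdeq : fderiv ℝ φ x = fderiv ℝ C x := by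
    rw [hfds] at hdψx
    have := sub_eq_zero.mp hdψx
    exact this.symm
  have hpeq : gradient φ x = VF x := by
    have h1 : gradient φ x = (InnerProductSpace.toDual ℝ _).symm (fderiv ℝ φ x) := rfl
    rw [h1, hfdeq]
    have h2 : fderiv ℝ C x = InnerProductSpace.toDual ℝ _ (VF x) := by
      rw [← (hgC x hx).hasFDerivAt.fderiv]
    rw [h2, LinearIsometryEquiv.symm_apply_apply]
  set p : E := gradient φ x with hp
  -- gradient of ψ near x
  obtain ⟨B, hB, hB0⟩ := cone_hessian y₀ x hxy a
  have hgradφd : DifferentiableAt ℝ (gradient φ) x :=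
    differentiableAt_gradient_of_contDiffAt (hφ x hx)
  have hev : ∀ z ∈ ball x ρ, gradient ψ z = VF z - gradient φ z := by
    intro z hz
    rw [hψ]
    rw [gradient_sub' (hgC z hz).hasFDerivAt.differentiableAt (hdφ z hz),
      (hgC z hz).gradient]
  have hevf : gradient ψ =ᶠ[𝓝 x] fun z => VF z - gradient φ z := by
    filter_upwards [isOpen_ball.mem_nhds hx] with z hz
    exact hev z hz
  have hgradψd : DifferentiableAt ℝ (gradient ψ) x :=
    hevf.differentiableAt_iff.mpr (hB.differentiableAt.sub hgradφd)
  -- second derivative along the line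
  set K : ℝ := ⟪(fderiv ℝ (gradient ψ) x) p, p⟫ with hK
  have hKle : K ≤ 0 := by
    have hline : ∀ t : ℝ, HasDerivAt (fun s : ℝ => x + s • p) p t := fun t => by
      simpa using ((hasDerivAt_id t).smul_const p).const_add x
    have htend : Tendsto (fun t : ℝ => x + t • p) (𝓝 0) (𝓝 x) := by
      have : Continuous (fun t : ℝ => x + t • p) :=
        continuous_const.add (continuous_id.smul continuous_const)
      have h0 := this.tendsto 0
      simpa using h0
    have hball : ∀ᶠ t : ℝ in 𝓝 0, x + t • p ∈ ball x ρ :=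
      htend (isOpen_ball.mem_nhds hx)
    apply second_deriv_nonpos_of_localmax (g := fun t => ψ (x + t • p))
      (G1 := fun t => ⟪gradient ψ (x + t • p), p⟫)
    · filter_upwards [hball] with t ht
      have h7 := hmax _ ht
      show ψ (x + t • p) ≤ ψ (x + (0:ℝ) • p)
      rw [show x + (0:ℝ) • p = x by simp]
      exact h7
    · filter_upwards [hball] with t ht
      set z := x + t • p with hz
      have hψz : HasFDerivAt ψ ((InnerProductSpace.toDual ℝ _) (VF z) - fderiv ℝ φ z) z := by
        have h1 := (hgC z ht).hasFDerivAt.sub (hdφ z ht).hasFDerivAt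
        exact h1
      have h2 := hψz.comp_hasDerivAt t (hline t)
      have h3 : ⟪gradient ψ z, p⟫
          = ((InnerProductSpace.toDual ℝ _) (VF z) - fderiv ℝ φ z) p := by
        have h4 : gradient ψ z
            = (InnerProductSpace.toDual ℝ _).symm (fderiv ℝ ψ z) := rfl
        rw [h4, hψz.fderiv, InnerProductSpace.toDual_symm_apply]
      rw [h3]
      exact h2
    · have hF : HasFDerivAt (gradient ψ) (fderiv ℝ (gradient ψ) x)
          ((fun t : ℝ => x + t • p) 0) := by
        simpa using hgradψd.hasFDerivAt
      have h5 := hF.comp_hasDerivAt 0 (hline 0)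
      have h6 := h5.inner ℝ (hasDerivAt_const (0:ℝ) p)
      simpa using h6
  -- conclude
  have hev2 : gradient φ =ᶠ[𝓝 x] fun z => VF z - gradient ψ z := by
    filter_upwards [isOpen_ball.mem_nhds hx] with z hz
    rw [hev z hz]
    abel
  have hfdφ : fderiv ℝ (gradient φ) x = B - fderiv ℝ (gradient ψ) x := by
    rw [hev2.fderiv_eq, fderiv_fun_sub hB.differentiableAt hgradψd, hB.fderiv]
  have : infLap φ x = ⟪B p, p⟫ - K := by
    rw [infLap, hfdφ, hK, ← hp, ContinuousLinearMap.sub_apply, inner_sub_left]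
  rw [this]
  have hBp : ⟪B p, p⟫ = 0 := by rw [hpeq]; exact hB0
  rw [hBp]
  linarith


lemma comparison_below (U : Set E) (hUb : Bornology.IsBounded U)
    (g : E → ℝ) (hgc : ContinuousOn g (closure U))
    (hsuper : ∀ x ∈ U, ∀ φ : E → ℝ, ContDiffOn ℝ 2 φ U →
      IsStrictLocalMinOn (fun z => g z - φ z) U x → infLap φ x ≤ 0)
    (y : E) (hy : y ∉ U) (c α : ℝ) (hα : 0 ≤ α)
    (hb : ∀ z ∈ frontier U, c - α * ‖z - y‖ ≤ g z) :
    ∀ z ∈ closure U, c - α * ‖z - y‖ ≤ g z := by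
  by_contra hcon
  push_neg at hcon
  obtain ⟨z0, hz0cl, hz0⟩ := hcon
  have hcomp : IsCompact (closure U) := hUb.isCompact_closure
  -- a radius bound
  obtain ⟨R0, hR0⟩ := (isBounded_iff_subset_closedBall y).mp hcomp.isBounded
  set R : ℝ := max R0 1 with hR
  have hR1 : (1:ℝ) ≤ R := le_max_right _ _
  have hRpos : (0:ℝ) < R := lt_of_lt_of_le one_pos hR1
  have hRb : ∀ z ∈ closure U, ‖z - y‖ ≤ R := by
    intro z hz
    have := hR0 hz
    rw [mem_closedBall, dist_eq_norm] at this
    exact le_trans this (le_max_left _ _)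
  set G0 : E → ℝ := fun z => g z - (c - α * ‖z - y‖) with hG0
  set m0 : ℝ := G0 z0 with hm0def
  have hm0 : m0 < 0 := by simp only [hm0def, hG0]; linarith
  -- choose δ
  obtain ⟨δ, hδpos, hδ1, hδ2⟩ : ∃ δ : ℝ, 0 < δ ∧ 2*δ*R^2 < -m0 ∧
      ∀ r : ℝ, 0 < r → r ≤ R → 2*δ*r ≠ α := by
    have hm0' : (0:ℝ) < -m0 := by linarith
    have hden1 : (0:ℝ) < 2*(R^2+1) := by positivity
    set δ1 : ℝ := (-m0)/(2*(R^2+1)) with hδ1def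
    have hδ1pos : 0 < δ1 := div_pos hm0' hden1
    have hδ1eq : δ1 * (2*(R^2+1)) = -m0 := div_mul_cancel₀ _ (ne_of_gt hden1)
    rcases eq_or_lt_of_le hα with hα0 | hαpos
    · refine ⟨δ1, hδ1pos, by nlinarith, ?_⟩
      intro r hr hrR
      have : 0 < 2*δ1*r := by positivity
      rw [← hα0]
      exact ne_of_gt this
    · have hden2 : (0:ℝ) < 2*(R+1) := by positivity
      set δ2 : ℝ := α/(2*(R+1)) with hδ2def
      have hδ2pos : 0 < δ2 := div_pos hαpos hden2
      have hδ2eq : δ2 * (2*(R+1)) = α := div_mul_cancel₀ _ (ne_of_gt hden2)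
      refine ⟨min δ1 δ2, lt_min hδ1pos hδ2pos, ?_, ?_⟩
      · have h1 : min δ1 δ2 ≤ δ1 := min_le_left _ _
        nlinarith [sq_nonneg R]
      · intro r hr hrR
        have h1 : min δ1 δ2 ≤ δ2 := min_le_right _ _
        have h3 : 0 < min δ1 δ2 := lt_min hδ1pos hδ2pos
        have h4 : 2*(min δ1 δ2)*r < α := by nlinarith
        exact ne_of_lt h4
  set G : E → ℝ := fun z => G0 z - δ * ‖z - y‖^2 with hG
  have hn1 : Continuous fun z : E => ‖z - y‖ := (continuous_id.sub continuous_const).norm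
  have hGc : ContinuousOn G (closure U) := by
    apply ContinuousOn.sub
    · exact hgc.sub (Continuous.continuousOn
        (continuous_const.sub (continuous_const.mul hn1)))
    · exact (continuous_const.mul (hn1.pow 2)).continuousOn
  obtain ⟨zs, hzscl, hzsmin⟩ := hcomp.exists_isMinOn ⟨z0, hz0cl⟩ hGc
  have hGzs : G zs ≤ m0 := by
    have h1 := hzsmin hz0cl
    have h2 : G z0 ≤ m0 := by
      simp only [hG, hm0def]
      nlinarith [norm_nonneg (z0 - y), sq_nonneg ‖z0 - y‖]
    exact le_trans h1 h2
  have hzsU : zs ∈ U := by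
    rcases (closure_eq_self_union_frontier U ▸ hzscl) with h | h
    · exact h
    · exfalso
      have h1 : 0 - δ * R^2 ≤ G zs := by
        have h2 := hb zs h
        have h3 : ‖zs - y‖ ≤ R := hRb zs hzscl
        have h4 : δ * ‖zs - y‖^2 ≤ δ * R^2 := by
          apply mul_le_mul_of_nonneg_left _ hδpos.le
          nlinarith [norm_nonneg (zs - y)]
        simp only [hG, hG0]
        nlinarith
      nlinarith [hGzs, h1, hδ1, mul_pos hδpos (pow_pos hRpos 2)]
  have hzsy : zs ≠ y := fun h => hy (h ▸ hzsU)
  have hrpos : 0 < ‖zs - y‖ := by rw [norm_pos_iff]; exact sub_ne_zero.mpr hzsy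
  have hrR : ‖zs - y‖ ≤ R := hRb zs hzscl
  -- the test function
  set φ : E → ℝ := fun z => c + (-α) * ‖z - y‖ + δ * ‖z - y‖^2 + (-(δ/2)) * ‖z - zs‖^2 with hφ
  have hcd : ContDiffOn ℝ 2 φ U :=
    contDiffOn_testFn y zs c (-α) δ (-(δ/2)) U (fun z hz => fun h => hy (h ▸ hz))
  have hslm : IsStrictLocalMinOn (fun z => g z - φ z) U zs := by
    refine ⟨1, one_pos, ?_⟩
    intro z hz hne
    have hzU : z ∈ U := hz.2
    have h1 : G zs ≤ G z := hzsmin (subset_closure hzU)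
    have h2 : (0:ℝ) < (δ/2) * ‖z - zs‖^2 := by
      have : 0 < ‖z - zs‖ := by rw [norm_pos_iff]; exact sub_ne_zero.mpr hne
      positivity
    have h3 : ∀ w : E, g w - φ w = G w + (δ/2) * ‖w - zs‖^2 := by
      intro w
      simp only [hφ, hG, hG0]
      ring
    show g zs - φ zs < g z - φ z
    rw [h3, h3]
    have h4 : ‖zs - zs‖ = 0 := by simp
    rw [h4]
    calc G zs + δ / 2 * 0 ^ 2 = G zs := by ring
    _ ≤ G z := h1
    _ < G z + δ / 2 * ‖z - zs‖ ^ 2 := by linarith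
  have happ := hsuper zs hzsU φ hcd hslm
  have hcomp2 := infLap_testFn y zs c (-α) δ (-(δ/2)) hzsy
  rw [hφ] at happ
  rw [hcomp2] at happ
  have h5 : 2*δ*‖zs - y‖ ≠ α := hδ2 _ hrpos hrR
  have h6 : (-α + 2*δ*‖zs - y‖) ≠ 0 := by
    intro h
    apply h5
    linarith
  have h7 : 0 < (-α + 2*δ*‖zs - y‖)^2 := by positivity
  have h8 : (2*δ + 2*(-(δ/2))) = δ := by ring
  nlinarith [mul_pos h7 hδpos]


lemma infLap_neg (φ : E → ℝ) (x : E) : infLap (fun z => -φ z) x = -infLap φ x := by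
  have h1 : gradient (fun z : E => -φ z) = fun z => -(gradient φ z) := by
    funext z
    unfold gradient
    rw [fderiv_fun_neg, map_neg]
  rw [infLap, infLap, h1, fderiv_fun_neg]
  simp only [ContinuousLinearMap.neg_apply, map_neg, inner_neg_left, inner_neg_right, neg_neg]

lemma comparison_above (U : Set E) (hUb : Bornology.IsBounded U)
    (g : E → ℝ) (hgc : ContinuousOn g (closure U))
    (hsub : ∀ x ∈ U, ∀ φ : E → ℝ, ContDiffOn ℝ 2 φ U →
      IsStrictLocalMaxOn (fun z => g z - φ z) U x → 0 ≤ infLap φ x)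
    (y : E) (hy : y ∉ U) (c α : ℝ) (hα : 0 ≤ α)
    (hb : ∀ z ∈ frontier U, g z ≤ c + α * ‖z - y‖) :
    ∀ z ∈ closure U, g z ≤ c + α * ‖z - y‖ := by
  have h := comparison_below U hUb (fun z => -g z) hgc.neg ?_ y hy (-c) α hα ?_
  · intro z hz
    have := h z hz
    linarith
  · intro x hx φ hφ hmin
    have hφ' : ContDiffOn ℝ 2 (fun z => -φ z) U := hφ.neg
    have hmax : IsStrictLocalMaxOn (fun z => g z - (fun w => -φ w) z) U x := by
      obtain ⟨r, hr, hmin'⟩ := hmin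
      refine ⟨r, hr, ?_⟩
      intro z hz hne
      have := hmin' z hz hne
      simp only at this ⊢
      linarith
    have := hsub x hx (fun z => -φ z) hφ' hmax
    rw [infLap_neg] at this
    linarith
  · intro z hz
    have := hb z hz
    linarith

/-- when int D = ∅ and Lip(f) = L ≤ 1, each v_α is a solution of (GC). -/
theorem stmt_5 (hn : 1 ≤ n) (Ω D : Set E) (hΩo : IsOpen Ω) (hΩne : Ω.Nonempty)
    (hΩb : Bornology.IsBounded Ω) (hD : D ⊆ Ω)
    (hint : interior D = ∅)
    (f : E → ℝ) (L : ℝ) (hL0 : 0 ≤ L) (hL1 : L ≤ 1)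
    (hf : LipschitzOnWith (Real.toNNReal L) f (frontier Ω))
    (α : ℝ) (hα : α ∈ Set.Icc L 1)
    (v : E → ℝ) (hvc : ContinuousOn v (closure Ω))
    (hvharm : IsInfHarmonic (Ω \ closure D) v)
    (hvf : ∀ x ∈ frontier Ω, v x = f x)
    (hvD : ∀ x ∈ closure D, v x = sSup ((fun y => f y - α * dist x y) '' frontier Ω)) :
    IsGCsol Ω D f v := by
  -- main proof
  classical
  have hα0 : 0 ≤ α := le_trans hL0 hα.1
  have hα1 : α ≤ 1 := hα.2
  haveI : Nonempty (Fin n) := ⟨⟨0, hn⟩⟩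
  haveI hnt : Nontrivial E := inferInstance
  -- frontier is nonempty and compact
  have hfne : (frontier Ω).Nonempty := by
    by_contra h
    rw [not_nonempty_iff_eq_empty] at h
    have hclopen : IsClopen Ω := isClopen_iff_frontier_eq_empty.mpr h
    rcases isClopen_iff.mp hclopen with h1 | h1
    · exact absurd (h1 ▸ hΩne) (by simp)
    · exact NormedSpace.unbounded_univ ℝ E (h1 ▸ hΩb)
  have hfc : IsCompact (frontier Ω) :=
    (hΩb.isCompact_closure).of_isClosed_subset isClosed_frontier frontier_subset_closure
  have hfcont : ContinuousOn f (frontier Ω) := hf.continuousOn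
  set w : E → ℝ := fun x => sSup ((fun y => f y - α * dist x y) '' frontier Ω) with hw
  have hvD' : ∀ z ∈ closure D, v z = w z := fun z hz => hvD z hz
  have hcontx : ∀ x : E, ContinuousOn (fun y => f y - α * dist x y) (frontier Ω) := by
    intro x
    exact hfcont.sub ((continuous_const.mul (continuous_const.dist continuous_id)).continuousOn)
  have hbdd : ∀ x : E, BddAbove ((fun y => f y - α * dist x y) '' frontier Ω) := fun x =>
    (hfc.bddAbove_image (hcontx x))
  have hwmem : ∀ x : E, ∀ y ∈ frontier Ω, f y - α * dist x y ≤ w x := fun x y hy =>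
    le_csSup (hbdd x) (mem_image_of_mem _ hy)
  have hwle : ∀ (x : E) (M : ℝ), (∀ y ∈ frontier Ω, f y - α * dist x y ≤ M) → w x ≤ M := by
    intro x M hM
    apply csSup_le (hfne.image _)
    rintro b ⟨y, hy, rfl⟩
    exact hM y hy
  have hwlipA : ∀ x z : E, w z ≤ w x + α * dist z x := by
    intro x z
    apply hwle
    intro y hy
    have h1 := hwmem x y hy
    have h2 : dist x y ≤ dist z x + dist z y := by
      rw [dist_comm z x]
      exact dist_triangle x z y
    have h3 : α * dist x y ≤ α * (dist z x + dist z y) := mul_le_mul_of_nonneg_left h2 hα0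
    linarith
  have hflip : ∀ y ∈ frontier Ω, ∀ z ∈ frontier Ω, f y - f z ≤ α * dist y z := by
    intro y hy z hz
    have h1 := hf.dist_le_mul y hy z hz
    rw [Real.coe_toNNReal L hL0] at h1
    have h2 : f y - f z ≤ dist (f y) (f z) := by
      rw [Real.dist_eq]
      exact le_abs_self _
    have h3 : L * dist y z ≤ α * dist y z :=
      mul_le_mul_of_nonneg_right hα.1 dist_nonneg
    linarith
  set U : Set E := Ω \ closure D with hU
  have hUo : IsOpen U := hΩo.sdiff isClosed_closure
  have hUb : Bornology.IsBounded U := hΩb.subset diff_subset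
  have hUsub : U ⊆ Ω := diff_subset
  have hclU : closure U ⊆ closure Ω := closure_mono hUsub
  have hvcU : ContinuousOn v (closure U) := hvc.mono hclU
  have hΩfront : ∀ z ∈ frontier Ω, z ∉ Ω := by
    intro z hz
    rw [hΩo.frontier_eq] at hz
    exact hz.2
  have hfrontU : ∀ z ∈ frontier U, z ∈ frontier Ω ∨ (z ∈ closure D ∧ z ∈ Ω) := by
    intro z hz
    have h1 : z ∈ closure U := frontier_subset_closure hz
    have h2 : z ∉ U := by
      rw [hUo.frontier_eq] at hz
      exact hz.2
    have h3 : z ∈ closure Ω := hclU h1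
    by_cases h4 : z ∈ Ω
    · right
      refine ⟨?_, h4⟩
      by_contra h5
      exact h2 ⟨h4, h5⟩
    · left
      rw [hΩo.frontier_eq]
      exact ⟨h3, h4⟩
  -- comparison from below with boundary cones
  have hcompbelow : ∀ y ∈ frontier Ω, ∀ z ∈ closure U, f y - α * ‖z - y‖ ≤ v z := by
    intro y hy
    apply comparison_below U hUb v hvcU hvharm.2 y (fun hyU => hΩfront y hy (hUsub hyU))
      (f y) α hα0
    intro z hz
    rcases hfrontU z hz with h1 | h1
    · rw [hvf z h1]
      have h2 := hflip y hy z h1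
      have h3 : dist y z = ‖z - y‖ := by rw [dist_comm, dist_eq_norm]
      rw [h3] at h2
      linarith
    · rw [hvD' z h1.1]
      have h2 := hwmem z y hy
      rw [dist_eq_norm] at h2
      exact h2
  -- w ≤ v on Ω
  have hwv : ∀ z ∈ Ω, w z ≤ v z := by
    intro z hz
    by_cases hzD : z ∈ closure D
    · rw [hvD' z hzD]
    · apply hwle
      intro y hy
      have := hcompbelow y hy z (subset_closure ⟨hz, hzD⟩)
      rw [dist_eq_norm]
      exact this
  refine ⟨hvc, ?_, ?_, hvf⟩
  · -- subsolution
    intro x hx φ hφ hmax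
    constructor
    · -- 0 ≤ infLap φ x
      by_cases hxD : x ∈ closure D
      · -- cone-touch argument
        obtain ⟨r, hr, hm⟩ := hmax
        obtain ⟨ρ1, hρ1, hball1⟩ := Metric.isOpen_iff.mp hΩo x hx
        obtain ⟨y₀, hy₀mem, hy₀max⟩ := hfc.exists_isMaxOn hfne (hcontx x)
        have hw0 : w x = f y₀ - α * dist x y₀ := by
          apply le_antisymm
          · apply hwle
            intro y hy
            exact hy₀max hy
          · exact hwmem x y₀ hy₀mem
        have hxy₀ : 0 < dist x y₀ := by
          rw [dist_pos]
          intro h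
          exact hΩfront y₀ hy₀mem (h ▸ hx)
        set ρ : ℝ := min ρ1 (min r (dist x y₀)) with hρdef
        have hρ : 0 < ρ := lt_min hρ1 (lt_min hr hxy₀)
        have hρsub : ball x ρ ⊆ Ω := fun z hz =>
          hball1 (ball_subset_ball (min_le_left _ _) hz)
        have hρr : ball x ρ ⊆ ball x r := ball_subset_ball
          (le_trans (min_le_right _ _) (min_le_left _ _))
        have hρy : ∀ z ∈ ball x ρ, z ≠ y₀ := by
          intro z hz h
          rw [h] at hz
          have := mem_ball.mp hz
          have h2 : ρ ≤ dist x y₀ := le_trans (min_le_right _ _) (min_le_right _ _)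
          rw [dist_comm] at this
          linarith
        apply infLap_nonneg_of_cone_touch y₀ x (f y₀) (-α) ρ hρ hρy φ
        · intro z hz
          exact hφ.contDiffAt (hΩo.mem_nhds (hρsub hz))
        · intro z hz
          by_cases hzx : z = x
          · rw [hzx]
          · have hzΩ : z ∈ Ω := hρsub hz
            have hCz : f y₀ + (-α) * ‖z - y₀‖ ≤ v z := by
              have h1 := hwmem z y₀ hy₀mem
              have h2 := hwv z hzΩ
              rw [dist_eq_norm] at h1
              linarith
            have hCx : f y₀ + (-α) * ‖x - y₀‖ = v x := by
              rw [hvD' x hxD, hw0, dist_eq_norm]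
              ring
            have h3 := hm z ⟨hρr hz, hzΩ⟩ hzx
            simp only at h3
            linarith
      · -- infinity harmonic point
        obtain ⟨r, hr, hm⟩ := hmax
        have hxU : x ∈ U := ⟨hx, hxD⟩
        apply hvharm.1 x hxU φ (hφ.mono hUsub)
        exact ⟨r, hr, fun z hz hne => hm z ⟨hz.1, hUsub hz.2⟩ hne⟩
    · -- gradient constraint with empty interior
      have h1 : chi (interior D) x = 0 := by
        rw [hint]
        simp [chi]
      rw [h1]
      exact norm_nonneg _
  · -- supersolution
    intro x hx φ hφ hmin
    by_cases hxD : x ∈ closure D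
    · right
      have hchi : chi (closure D) x = 1 := by
        simp [chi, indicator_of_mem hxD]
      rw [hchi]
      -- v z ≤ v x + α ‖z - x‖ for z ∈ Ω
      have hvband : ∀ z ∈ Ω, v z ≤ v x + α * ‖z - x‖ := by
        have hxU : x ∉ U := fun h => h.2 hxD
        have habove : ∀ z ∈ closure U, v z ≤ v x + α * ‖z - x‖ := by
          apply comparison_above U hUb v hvcU hvharm.1 x hxU (v x) α hα0
          intro z hz
          rcases hfrontU z hz with h1 | h1
          · rw [hvf z h1, hvD' x hxD]
            have h2 := hwmem x z h1
            have h3 : dist x z = ‖z - x‖ := by rw [dist_comm, dist_eq_norm]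
            rw [h3] at h2
            linarith
          · rw [hvD' z h1.1, hvD' x hxD]
            have h2 := hwlipA x z
            rw [dist_eq_norm] at h2
            exact h2
        intro z hz
        by_cases hzD : z ∈ closure D
        · rw [hvD' z hzD, hvD' x hxD]
          have h2 := hwlipA x z
          rw [dist_eq_norm] at h2
          exact h2
        · exact habove z (subset_closure ⟨hz, hzD⟩)
      obtain ⟨r, hr, hm⟩ := hmin
      obtain ⟨ρ1, hρ1, hball1⟩ := Metric.isOpen_iff.mp hΩo x hx
      set ρ : ℝ := min ρ1 r with hρdef
      have hρ : 0 < ρ := lt_min hρ1 hr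
      have hdiff : DifferentiableAt ℝ φ x :=
        (hφ.contDiffAt (hΩo.mem_nhds hx)).differentiableAt (by norm_num)
      have hub : ‖gradient φ x‖ ≤ α := by
        apply gradient_norm_le_of_upper α hα0 φ x hdiff ρ hρ
        intro z hz
        by_cases hzx : z = x
        · simp [hzx]
        · have hzΩ : z ∈ Ω := hball1 (ball_subset_ball (min_le_left _ _) hz)
          have h3 := hm z ⟨ball_subset_ball (min_le_right _ _) hz, hzΩ⟩ hzx
          simp only at h3
          have h4 := hvband z hzΩ
          linarith
      linarith
    · left
      obtain ⟨r, hr, hm⟩ := hmin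
      have hxU : x ∈ U := ⟨hx, hxD⟩
      apply hvharm.2 x hxU φ (hφ.mono hUsub)
      exact ⟨r, hr, fun z hz hne => hm z ⟨hz.1, hUsub hz.2⟩ hne⟩


end
end

section
/- Let ε > 0, let F : Γ_ε → ℝ be Lipschitz continuous with Lipschitz constant Lip(F), and let u : Ω ∪ Γ_ε → ℝ be a bounded function that satisfies the D-game dynamic programming principle in Ω and u = F on Γ_ε. Then for every x ∈ Ω one has sup_{cl B_ε(x)} u − inf_{cl B_ε(x)} u ≤ 4 max{Lip(F), 1} · ε. -/
open Metric Set Filter MeasureTheory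
open scoped Topology RealInnerProductSpace NNReal

noncomputable section

variable {n : ℕ}

local notation "E" => EuclideanSpace ℝ (Fin n)

/-- A segment from a point of an open set to a point outside its closure meets the frontier. -/
lemma aux_frontier_cross {X : Type*} [NormedAddCommGroup X] [NormedSpace ℝ X]
    {Ω : Set X} (hΩo : IsOpen Ω) {a b : X} (ha : a ∈ Ω) (hb : b ∉ closure Ω) :
    ∃ z ∈ segment ℝ a b, z ∈ frontier Ω := by
  by_contra h
  push_neg at h
  have hsub : segment ℝ a b ⊆ Ω ∪ (closure Ω)ᶜ := by
    intro z hz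
    by_cases hzc : z ∈ closure Ω
    · left
      have : z ∈ interior Ω := by
        by_contra hzi
        exact h z hz ⟨hzc, hzi⟩
      rwa [hΩo.interior_eq] at this
    · exact Or.inr hzc
  obtain ⟨z, hzseg, hzΩ, hzc⟩ :=
    (convex_segment a b).isPreconnected Ω (closure Ω)ᶜ hΩo isClosed_closure.isOpen_compl hsub
      ⟨a, left_mem_segment ℝ a b, ha⟩ ⟨b, right_mem_segment ℝ a b, hb⟩
  exact hzc (subset_closure hzΩ)

/-- For `x ∈ Ω`, the closed `ε`-ball around `x` is contained in `Ω ∪ Γ_ε`. -/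
lemma aux_ball_subset {Ω : Set E} (hΩo : IsOpen Ω) {ε : ℝ} (hε : 0 < ε) {x : E}
    (hx : x ∈ Ω) {y : E} (hy : y ∈ closedBall x ε) : y ∈ Ω ∪ GammaStrip Ω ε := by
  by_cases hyΩ : y ∈ Ω
  · exact Or.inl hyΩ
  right
  refine ⟨hyΩ, ?_⟩
  by_cases hyc : y ∈ closure Ω
  · have hfr : y ∈ frontier Ω := ⟨hyc, by rwa [hΩo.interior_eq]⟩
    have := Metric.infDist_zero_of_mem hfr
    linarith
  · have hxy : y ≠ x := fun h => hyΩ (h ▸ hx)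
    have hd : 0 < dist y x := dist_pos.mpr hxy
    obtain ⟨r, hr, hball⟩ := Metric.isOpen_iff.mp hΩo x hx
    set d := dist y x with hdd
    set ρ := min (r / 2) d with hρdef
    have hρ : 0 < ρ := lt_min (by linarith) hd
    have hρd : ρ ≤ d := min_le_right _ _
    set a : E := x + (ρ / d) • (y - x) with hadef
    have hnyx : ‖y - x‖ = d := (dist_eq_norm y x).symm
    have ha : a ∈ Ω := by
      apply hball
      have : dist a x = ρ := by
        rw [dist_eq_norm]
        have : a - x = (ρ / d) • (y - x) := by rw [hadef]; abel
        rw [this, norm_smul, hnyx, Real.norm_eq_abs, abs_of_pos (by positivity)]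
        field_simp
      rw [Metric.mem_ball, this]
      have : ρ ≤ r / 2 := min_le_left _ _
      linarith
    have hay : dist y a = d - ρ := by
      rw [dist_eq_norm]
      have h1 : y - a = (1 - ρ / d) • (y - x) := by
        rw [hadef, sub_smul, one_smul]; abel
      rw [h1, norm_smul, hnyx, Real.norm_eq_abs, abs_of_nonneg]
      · field_simp
      · have : ρ / d ≤ 1 := (div_le_one hd).mpr hρd
        linarith
    obtain ⟨z, hzseg, hzf⟩ := aux_frontier_cross hΩo ha hyc
    have hyz : dist y z ≤ dist y a := by
      obtain ⟨s, t, hs, ht, hst, rfl⟩ := hzseg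
      have h1 : y - (s • a + t • y) = s • (y - a) := by
        have h2 : t = 1 - s := by linarith
        rw [h2, sub_smul, one_smul, smul_sub]; abel
      rw [dist_eq_norm, h1, norm_smul, Real.norm_eq_abs, abs_of_nonneg hs,
        ← dist_eq_norm]
      nlinarith [dist_nonneg (x := y) (y := a)]
    have hle : Metric.infDist y (frontier Ω) ≤ dist y z :=
      Metric.infDist_le_dist_of_mem hzf
    have hdε : d ≤ ε := Metric.mem_closedBall.mp hy
    linarith

set_option maxHeartbeats 2000000 in
/-- oscillation estimate for bounded functions satisfying the D-game DPP. -/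
theorem stmt_11 (hn : 1 ≤ n) (Ω D : Set E) (hΩo : IsOpen Ω) (hΩne : Ω.Nonempty)
    (hΩb : Bornology.IsBounded Ω) (hD : D ⊆ Ω)
    (ε : ℝ) (hε : 0 < ε)
    (F : E → ℝ) (K : ℝ) (hK : 0 ≤ K)
    (hF : LipschitzOnWith (Real.toNNReal K) F (GammaStrip Ω ε))
    (u : E → ℝ) (M : ℝ) (hub : ∀ x ∈ Ω ∪ GammaStrip Ω ε, |u x| ≤ M)
    (hdpp : SatisfiesDPP_D Ω D ε u)
    (huF : ∀ x ∈ GammaStrip Ω ε, u x = F x) :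
    ∀ x ∈ Ω, sSup (u '' closedBall x ε) - sInf (u '' closedBall x ε) ≤
      4 * max K 1 * ε := by
  intro x₀ hx₀
  set C := max K 1 with hCdef
  have hC1 : (1 : ℝ) ≤ C := le_max_right _ _
  have hKC : K ≤ C := le_max_left _ _
  have hCpos : (0 : ℝ) < C := lt_of_lt_of_le one_pos hC1
  have hεC : ε ≤ C * ε := by nlinarith
  have hce : 0 < 2 * C * ε := by positivity
  -- abbreviations
  set Γ := GammaStrip Ω ε with hΓdef
  have hsub : ∀ x ∈ Ω, ∀ y ∈ closedBall x ε, y ∈ Ω ∪ Γ :=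
    fun x hx y hy => aux_ball_subset hΩo hε hx hy
  have hne : ∀ x : E, (u '' closedBall x ε).Nonempty :=
    fun x => ⟨u x, x, mem_closedBall_self hε.le, rfl⟩
  have hbddA : ∀ x ∈ Ω, BddAbove (u '' closedBall x ε) := by
    intro x hx
    refine ⟨M, ?_⟩
    rintro a ⟨y, hy, rfl⟩
    exact (abs_le.mp (hub y (hsub x hx y hy))).2
  have hbddB : ∀ x ∈ Ω, BddBelow (u '' closedBall x ε) := by
    intro x hx
    refine ⟨-M, ?_⟩
    rintro a ⟨y, hy, rfl⟩
    exact (abs_le.mp (hub y (hsub x hx y hy))).1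
  have hSleM : ∀ x ∈ Ω, sSup (u '' closedBall x ε) ≤ M := by
    intro x hx
    refine csSup_le (hne x) ?_
    rintro a ⟨y, hy, rfl⟩
    exact (abs_le.mp (hub y (hsub x hx y hy))).2
  have hIgeM : ∀ x ∈ Ω, -M ≤ sInf (u '' closedBall x ε) := by
    intro x hx
    refine le_csInf (hne x) ?_
    rintro a ⟨y, hy, rfl⟩
    exact (abs_le.mp (hub y (hsub x hx y hy))).1
  have hleS : ∀ x ∈ Ω, ∀ y ∈ closedBall x ε, u y ≤ sSup (u '' closedBall x ε) :=
    fun x hx y hy => le_csSup (hbddA x hx) ⟨y, hy, rfl⟩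
  have hIle : ∀ x ∈ Ω, ∀ y ∈ closedBall x ε, sInf (u '' closedBall x ε) ≤ u y :=
    fun x hx y hy => csInf_le (hbddB x hx) ⟨y, hy, rfl⟩
  have hchi : ∀ w : E, 0 ≤ chi D w ∧ chi D w ≤ 1 := by
    intro w
    by_cases h : w ∈ D <;>
      simp [chi, Set.indicator_of_mem, Set.indicator_of_notMem, h]
  have hhalf : ∀ x ∈ Ω,
      u x ≤ (sSup (u '' closedBall x ε) + sInf (u '' closedBall x ε)) / 2 := by
    intro x hx
    rw [hdpp x hx]
    exact min_le_left _ _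
  have hlow : ∀ x ∈ Ω,
      min ((sSup (u '' closedBall x ε) + sInf (u '' closedBall x ε)) / 2)
        (sSup (u '' closedBall x ε) - ε) ≤ u x := by
    intro x hx
    rw [hdpp x hx]
    refine min_le_min le_rfl ?_
    have h1 := (hchi x).1
    have h2 := (hchi x).2
    nlinarith
  -- the ascending chain
  have asc : ∀ N : ℕ, ∀ x ∈ Ω,
      2 * C * ε < sSup (u '' closedBall x ε) - u x →
      M ≤ u x + N * (2 * C * ε) →
      ∃ z w, z ∈ Ω ∧ w ∈ Γ ∧ dist w z ≤ ε ∧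
        2 * C * ε < sSup (u '' closedBall z ε) - u z ∧ 2 * C * ε < u w - u z := by
    intro N
    induction N with
    | zero =>
      intro x hx hSx hM
      have h1 : u x ≤ sSup (u '' closedBall x ε) :=
        hleS x hx x (mem_closedBall_self hε.le)
      have h2 := hSleM x hx
      push_cast at hM
      linarith
    | succ N ih =>
      intro x hx hSx hM
      set t := (sSup (u '' closedBall x ε) - u x - 2 * C * ε) / 2 with htdef
      have ht : 0 < t := by simp only [htdef]; linarith
      obtain ⟨a, ha, hlt⟩ := exists_lt_of_lt_csSup (hne x)
        (show sSup (u '' closedBall x ε) - t < sSup (u '' closedBall x ε) by linarith)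
      obtain ⟨y, hy, rfl⟩ := ha
      have hgain : 2 * C * ε < u y - u x := by simp only [htdef] at hlt ⊢; linarith
      rcases hsub x hx y hy with hyΩ | hyΓ
      · -- continue the chain
        have hxy : x ∈ closedBall y ε := by
          rw [Metric.mem_closedBall, dist_comm]
          exact Metric.mem_closedBall.mp hy
        have hIy : sInf (u '' closedBall y ε) ≤ u x := hIle y hyΩ x hxy
        have hhy := hhalf y hyΩ
        have hSy : 2 * C * ε < sSup (u '' closedBall y ε) - u y := by linarith
        have hMy : M ≤ u y + N * (2 * C * ε) := by push_cast at hM ⊢; linarith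
        exact ih y hyΩ hSy hMy
      · exact ⟨x, y, hx, hyΓ, Metric.mem_closedBall.mp hy, hSx, hgain⟩
  -- the descending chain
  have desc : ∀ N : ℕ, ∀ z ∈ Ω,
      2 * C * ε < u z - sInf (u '' closedBall z ε) →
      u z ≤ -M + N * (2 * C * ε) →
      ∃ L : ℕ, ∃ w, w ∈ Γ ∧ dist w z ≤ (L + 1) * ε ∧
        (L + 1) * (2 * C * ε) < u z - u w := by
    intro N
    induction N with
    | zero =>
      intro z hz hIz hM
      have h1 : sInf (u '' closedBall z ε) ≤ u z :=
        hIle z hz z (mem_closedBall_self hε.le)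
      have h2 := hIgeM z hz
      push_cast at hM
      linarith
    | succ N ih =>
      intro z hz hIz hM
      set t := (u z - sInf (u '' closedBall z ε) - 2 * C * ε) / 2 with htdef
      have ht : 0 < t := by simp only [htdef]; linarith
      obtain ⟨a, ha, hlt⟩ := exists_lt_of_csInf_lt (hne z)
        (show sInf (u '' closedBall z ε) < sInf (u '' closedBall z ε) + t by linarith)
      obtain ⟨y, hy, rfl⟩ := ha
      have hdrop : 2 * C * ε < u z - u y := by simp only [htdef] at hlt ⊢; linarith
      rcases hsub z hz y hy with hyΩ | hyΓ
      · -- continue the chain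
        have hzy : z ∈ closedBall y ε := by
          rw [Metric.mem_closedBall, dist_comm]
          exact Metric.mem_closedBall.mp hy
        have hSy : u z ≤ sSup (u '' closedBall y ε) := hleS y hyΩ z hzy
        have hly := hlow y hyΩ
        rcases min_le_iff.mp hly with hcase | hcase
        · have hIy : 2 * C * ε < u y - sInf (u '' closedBall y ε) := by linarith
          have hMy : u y ≤ -M + N * (2 * C * ε) := by push_cast at hM ⊢; linarith
          obtain ⟨L, w, hwΓ, hdist, hgap⟩ := ih y hyΩ hIy hMy
          refine ⟨L + 1, w, hwΓ, ?_, ?_⟩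
          · have hyz : dist y z ≤ ε := Metric.mem_closedBall.mp hy
            have := dist_triangle w y z
            push_cast
            push_cast at hdist
            linarith
          · push_cast
            push_cast at hgap
            nlinarith
        · linarith
      · refine ⟨0, y, hyΓ, ?_, ?_⟩
        · have := Metric.mem_closedBall.mp hy
          push_cast; linarith
        · push_cast; linarith
  -- conclusion
  by_contra hcon
  push_neg at hcon
  have h1 : 2 * C * ε < sSup (u '' closedBall x₀ ε) - u x₀ := by
    have := hhalf x₀ hx₀
    linarith
  obtain ⟨N₁, hN₁⟩ := exists_nat_ge ((M - u x₀) / (2 * C * ε))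
  have hN₁' : M ≤ u x₀ + N₁ * (2 * C * ε) := by
    have := (div_le_iff₀ hce).mp hN₁
    linarith
  obtain ⟨z, w, hz, hwΓ, hdwz, hSz, hgain⟩ := asc N₁ x₀ hx₀ h1 hN₁'
  have h2 : 2 * C * ε < u z - sInf (u '' closedBall z ε) := by
    have hlz := hlow z hz
    rcases min_le_iff.mp hlz with hcase | hcase
    · linarith
    · linarith
  obtain ⟨N₂, hN₂⟩ := exists_nat_ge ((u z + M) / (2 * C * ε))
  have hN₂' : u z ≤ -M + N₂ * (2 * C * ε) := by
    have := (div_le_iff₀ hce).mp hN₂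
    linarith
  obtain ⟨L, w', hw'Γ, hdist, hgap⟩ := desc N₂ z hz h2 hN₂'
  -- both w and w' are in the boundary strip
  have hgap2 : ((L : ℝ) + 2) * (2 * C * ε) < u w - u w' := by ring_nf; ring_nf at hgap; linarith
  have hdist2 : dist w w' ≤ ((L : ℝ) + 2) * ε := by
    have h3 := dist_triangle w z w'
    have h4 : dist z w' = dist w' z := dist_comm z w'
    linarith
  have hlipR : dist (F w) (F w') ≤ K * dist w w' := by
    have := LipschitzOnWith.dist_le_mul hF w hwΓ w' hw'Γ
    rwa [Real.coe_toNNReal K hK] at this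
  have huw : u w = F w := huF w hwΓ
  have huw' : u w' = F w' := huF w' hw'Γ
  have habs : u w - u w' ≤ K * dist w w' := by
    rw [huw, huw']
    calc F w - F w' ≤ |F w - F w'| := le_abs_self _
      _ = dist (F w) (F w') := (Real.dist_eq _ _).symm
      _ ≤ K * dist w w' := hlipR
  have hL2 : (0:ℝ) < (L : ℝ) + 2 := by positivity
  have hk1 : K * dist w w' ≤ C * (((L : ℝ) + 2) * ε) := by
    have hd0 : (0:ℝ) ≤ dist w w' := dist_nonneg
    nlinarith
  nlinarith


end
end

section
/- Every L∞-viscosity subsolution of min{Δ∞u, |Du| − χ_D} = 0 in Ω is a viscosity subsolution of the same equation, and every L∞-viscosity supersolution is a viscosity supersolution; in particular, every L∞-viscosity solution is a viscosity solution. -/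
open Metric Set Filter MeasureTheory
open scoped Topology RealInnerProductSpace NNReal

noncomputable section

variable {n : ℕ}

local notation "E" => EuclideanSpace ℝ (Fin n)

/- ### Auxiliary lemmas -/

lemma aux_chi_nonneg (S : Set E) (x : E) : 0 ≤ chi S x :=
  Set.indicator_nonneg (fun _ _ => zero_le_one) x

lemma aux_chi_le_one (S : Set E) (x : E) : chi S x ≤ 1 := by
  unfold chi
  by_cases hx : x ∈ S
  · simp [hx]
  · simp [hx]

lemma aux_chi_of_mem {S : Set E} {x : E} (hx : x ∈ S) : chi S x = 1 := by
  simp [chi, hx]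

lemma aux_chi_of_not_mem {S : Set E} {x : E} (hx : x ∉ S) : chi S x = 0 := by
  simp [chi, hx]

lemma aux_ae_neBot (x : E) {r : ℝ} (hr : 0 < r) :
    (ae (volume.restrict (ball x r))).NeBot := by
  rw [ae_neBot, Ne, Measure.restrict_eq_zero]
  exact (measure_ball_pos volume x hr).ne'

lemma aux_essSup_le {F : E → ℝ} {x : E} {r b c : ℝ} (hr : 0 < r)
    (hb : ∀ y ∈ ball x r, b ≤ F y) (hc : ∀ y ∈ ball x r, F y ≤ c) :
    essSup F (volume.restrict (ball x r)) ≤ c := by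
  have hne := aux_ae_neBot x hr
  rw [essSup, Filter.limsup_eq]
  apply csInf_le
  · refine ⟨b, fun a ha => ?_⟩
    have h1 : ∀ᵐ y ∂(volume.restrict (ball x r)), b ≤ F y :=
      (ae_restrict_mem measurableSet_ball).mono (fun y hy => hb y hy)
    have ha2 : ∀ᶠ y in ae (volume.restrict (ball x r)), F y ≤ a := ha
    obtain ⟨y, hy1, hy2⟩ := (Filter.Eventually.and ha2 h1).exists
    exact le_trans hy2 hy1
  · exact (ae_restrict_mem measurableSet_ball).mono (fun y hy => hc y hy)

lemma aux_le_essInf {F : E → ℝ} {x : E} {r b c : ℝ} (hr : 0 < r)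
    (hb : ∀ y ∈ ball x r, b ≤ F y) (hc : ∀ y ∈ ball x r, F y ≤ c) :
    b ≤ essInf F (volume.restrict (ball x r)) := by
  have hne := aux_ae_neBot x hr
  rw [essInf, Filter.liminf_eq]
  apply le_csSup
  · refine ⟨c, fun a ha => ?_⟩
    have h1 : ∀ᵐ y ∂(volume.restrict (ball x r)), F y ≤ c :=
      (ae_restrict_mem measurableSet_ball).mono (fun y hy => hc y hy)
    have ha2 : ∀ᶠ y in ae (volume.restrict (ball x r)), a ≤ F y := ha
    obtain ⟨y, hy1, hy2⟩ := (Filter.Eventually.and ha2 h1).exists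
    exact le_trans hy1 hy2
  · exact (ae_restrict_mem measurableSet_ball).mono (fun y hy => hb y hy)

lemma aux_min_le_essSup {F : E → ℝ} {x : E} {r r₀ b : ℝ} (hr : 0 < r) (hr₀ : 0 < r₀)
    (hb : ∀ y ∈ ball x r₀, b ≤ F y) :
    min b 0 ≤ essSup F (volume.restrict (ball x r)) := by
  set r' := min r r₀ with hr'def
  have hr' : 0 < r' := lt_min hr hr₀
  have hne := aux_ae_neBot x hr'
  rw [essSup, Filter.limsup_eq]
  rcases Set.eq_empty_or_nonempty {a | ∀ᶠ y in ae (volume.restrict (ball x r)), F y ≤ a}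
    with he | hne2
  · rw [he, Real.sInf_empty]; exact min_le_right _ _
  · refine le_trans (min_le_left _ _) (le_csInf hne2 fun a ha => ?_)
    have hmono : ae (volume.restrict (ball x r')) ≤ ae (volume.restrict (ball x r)) :=
      ae_mono (Measure.restrict_mono (ball_subset_ball (min_le_left _ _)) le_rfl)
    have ha2 : ∀ᶠ y in ae (volume.restrict (ball x r)), F y ≤ a := ha
    have ha' : ∀ᶠ y in ae (volume.restrict (ball x r')), F y ≤ a :=
      ha2.filter_mono hmono
    have h1 : ∀ᵐ y ∂(volume.restrict (ball x r')), b ≤ F y :=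
      (ae_restrict_mem measurableSet_ball).mono
        (fun y hy => hb y (ball_subset_ball (min_le_right _ _) hy))
    obtain ⟨y, hy1, hy2⟩ := (Filter.Eventually.and ha' h1).exists
    exact le_trans hy2 hy1

lemma aux_essInf_le_max {F : E → ℝ} {x : E} {r r₀ c : ℝ} (hr : 0 < r) (hr₀ : 0 < r₀)
    (hc : ∀ y ∈ ball x r₀, F y ≤ c) :
    essInf F (volume.restrict (ball x r)) ≤ max c 0 := by
  set r' := min r r₀ with hr'def
  have hr' : 0 < r' := lt_min hr hr₀
  have hne := aux_ae_neBot x hr'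
  rw [essInf, Filter.liminf_eq]
  rcases Set.eq_empty_or_nonempty {a | ∀ᶠ y in ae (volume.restrict (ball x r)), a ≤ F y}
    with he | hne2
  · rw [he, Real.sSup_empty]; exact le_max_right _ _
  · refine le_trans (csSup_le hne2 fun a ha => ?_) (le_max_left _ _)
    have hmono : ae (volume.restrict (ball x r')) ≤ ae (volume.restrict (ball x r)) :=
      ae_mono (Measure.restrict_mono (ball_subset_ball (min_le_left _ _)) le_rfl)
    have ha2 : ∀ᶠ y in ae (volume.restrict (ball x r)), a ≤ F y := ha
    have ha' : ∀ᶠ y in ae (volume.restrict (ball x r')), a ≤ F y :=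
      ha2.filter_mono hmono
    have h1 : ∀ᵐ y ∂(volume.restrict (ball x r')), F y ≤ c :=
      (ae_restrict_mem measurableSet_ball).mono
        (fun y hy => hc y (ball_subset_ball (min_le_right _ _) hy))
    obtain ⟨y, hy1, hy2⟩ := (Filter.Eventually.and ha' h1).exists
    exact le_trans hy1 hy2

lemma aux_essLimsupAt_le {F : E → ℝ} {x : E} {r₀ b c : ℝ} (hr₀ : 0 < r₀)
    (hb : ∀ y ∈ ball x r₀, b ≤ F y) (hc : ∀ y ∈ ball x r₀, F y ≤ c) :
    essLimsupAt F x ≤ c := by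
  have hbdd : BddBelow (Set.range fun r : ℝ =>
      ⨅ (_ : r ∈ Set.Ioi (0:ℝ)), essSup F (volume.restrict (ball x r))) := by
    refine ⟨min b 0, ?_⟩
    rintro v ⟨r, rfl⟩
    dsimp only
    by_cases hr : r ∈ Set.Ioi (0:ℝ)
    · rw [ciInf_pos hr]
      exact aux_min_le_essSup hr hr₀ hb
    · haveI : IsEmpty (r ∈ Set.Ioi (0:ℝ)) := isEmpty_Prop.2 hr
      rw [Real.iInf_of_isEmpty]
      exact min_le_right _ _
  calc essLimsupAt F x
      ≤ ⨅ (_ : r₀ ∈ Set.Ioi (0:ℝ)), essSup F (volume.restrict (ball x r₀)) :=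
        ciInf_le hbdd r₀
    _ = essSup F (volume.restrict (ball x r₀)) := ciInf_pos (Set.mem_Ioi.mpr hr₀)
    _ ≤ c := aux_essSup_le hr₀ hb hc

lemma aux_le_essLiminfAt {F : E → ℝ} {x : E} {r₀ b c : ℝ} (hr₀ : 0 < r₀)
    (hb : ∀ y ∈ ball x r₀, b ≤ F y) (hc : ∀ y ∈ ball x r₀, F y ≤ c) :
    b ≤ essLiminfAt F x := by
  have hbdd : BddAbove (Set.range fun r : ℝ =>
      ⨆ (_ : r ∈ Set.Ioi (0:ℝ)), essInf F (volume.restrict (ball x r))) := by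
    refine ⟨max c 0, ?_⟩
    rintro v ⟨r, rfl⟩
    dsimp only
    by_cases hr : r ∈ Set.Ioi (0:ℝ)
    · rw [ciSup_pos hr]
      exact aux_essInf_le_max hr hr₀ hc
    · haveI : IsEmpty (r ∈ Set.Ioi (0:ℝ)) := isEmpty_Prop.2 hr
      rw [Real.iSup_of_isEmpty]
      exact le_max_right _ _
  calc b ≤ essInf F (volume.restrict (ball x r₀)) := aux_le_essInf hr₀ hb hc
    _ = ⨆ (_ : r₀ ∈ Set.Ioi (0:ℝ)), essInf F (volume.restrict (ball x r₀)) :=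
        (ciSup_pos (p := r₀ ∈ Set.Ioi (0:ℝ))
          (f := fun _ => essInf F (volume.restrict (ball x r₀))) (Set.mem_Ioi.mpr hr₀)).symm
    _ ≤ essLiminfAt F x := le_ciSup hbdd r₀

lemma aux_gradient_contDiffAt {Ω : Set E} (hΩo : IsOpen Ω) {φ : E → ℝ}
    (hφ : ContDiffOn ℝ 2 φ Ω) {x : E} (hx : x ∈ Ω) :
    ContDiffAt ℝ 1 (gradient φ) x := by
  have hφx : ContDiffAt ℝ 2 φ x := hφ.contDiffAt (hΩo.mem_nhds hx)
  have h1 : ContDiffAt ℝ 1 (fderiv ℝ φ) x := hφx.fderiv_right (by norm_num)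
  have h2 : ContDiff ℝ 1 fun L : E →L[ℝ] ℝ =>
      (InnerProductSpace.toDual ℝ E).symm L :=
    (InnerProductSpace.toDual ℝ E).symm.contDiff
  exact h2.comp_contDiffAt x h1

lemma aux_W2InfLoc {Ω : Set E} (hΩo : IsOpen Ω) {φ : E → ℝ}
    (hφ : ContDiffOn ℝ 2 φ Ω) : W2InfLoc Ω φ := by
  constructor
  · intro x hx
    exact (hφ.contDiffAt (hΩo.mem_nhds hx)).differentiableAt (by norm_num)
  · intro x hx
    obtain ⟨K, t, ht, hlip⟩ := (aux_gradient_contDiffAt hΩo hφ hx).exists_lipschitzOnWith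
    exact ⟨K, t, mem_nhdsWithin_of_mem_nhds ht, hlip⟩

lemma aux_cont {Ω : Set E} (hΩo : IsOpen Ω) {φ : E → ℝ}
    (hφ : ContDiffOn ℝ 2 φ Ω) {x : E} (hx : x ∈ Ω) :
    ContinuousAt (fun y => ‖gradient φ y‖) x ∧ ContinuousAt (infLap φ) x := by
  have hgrad : ContinuousAt (gradient φ) x :=
    (aux_gradient_contDiffAt hΩo hφ hx).continuousAt
  have hA : ContinuousAt (fderiv ℝ (gradient φ)) x := by
    have : ∀ᶠ y in 𝓝 x, y ∈ Ω := hΩo.mem_nhds hx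
    have h0 : ContDiffAt ℝ (0 + 1) (gradient φ) x := by
      simpa using aux_gradient_contDiffAt hΩo hφ hx
    exact (h0.fderiv_right (le_refl _)).continuousAt
  refine ⟨hgrad.norm, ?_⟩
  have happ : ContinuousAt (fun y => fderiv ℝ (gradient φ) y (gradient φ y)) x :=
    isBoundedBilinearMap_apply.continuous.continuousAt.comp
      (f := fun y => (fderiv ℝ (gradient φ) y, gradient φ y)) (hA.prodMk hgrad)
  exact happ.inner hgrad

/-- L∞-viscosity sub/supersolutions are viscosity sub/supersolutions. -/
theorem stmt_14 (hn : 1 ≤ n) (Ω D : Set E) (hΩo : IsOpen Ω) (hΩne : Ω.Nonempty)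
    (hΩb : Bornology.IsBounded Ω) (hD : D ⊆ Ω)
    (u : E → ℝ) (hu : ContinuousOn u Ω) :
    (IsLinfGCsub Ω D u → IsGCsub Ω D u) ∧
      (IsLinfGCsuper Ω D u → IsGCsuper Ω D u) ∧
      (IsLinfGCsub Ω D u ∧ IsLinfGCsuper Ω D u → IsGCsub Ω D u ∧ IsGCsuper Ω D u) := by
  have key_sub : IsLinfGCsub Ω D u → IsGCsub Ω D u := by
    intro h x hx φ hφ hmax
    obtain ⟨hNG, hIL⟩ := aux_cont hΩo hφ hx
    have H := h x hx φ (aux_W2InfLoc hΩo hφ) hmax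
    set F := fun y => min (infLap φ y) (‖gradient φ y‖ - chi D y) with hFdef
    constructor
    · by_contra h'
      push_neg at h'
      have e1 : ∀ᶠ y in 𝓝 x, infLap φ y < infLap φ x / 2 :=
        hIL.eventually_lt_const (by linarith)
      have e2 : ∀ᶠ y in 𝓝 x, infLap φ x - 1 < infLap φ y :=
        hIL.eventually_const_lt (by linarith)
      have e3 : ∀ᶠ y in 𝓝 x, ‖gradient φ x‖ - 1 < ‖gradient φ y‖ :=
        hNG.eventually_const_lt (by linarith)
      obtain ⟨r₀, hr₀, hball⟩ := Metric.eventually_nhds_iff_ball.1 ((e1.and e2).and e3)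
      have hcon : essLimsupAt F x ≤ infLap φ x / 2 := by
        refine aux_essLimsupAt_le (b := min (infLap φ x - 1) (‖gradient φ x‖ - 2))
          hr₀ (fun y hy => ?_) (fun y hy => ?_)
        · obtain ⟨⟨_, h2⟩, h3⟩ := hball y hy
          have hch := aux_chi_le_one D y
          exact le_min ((min_le_left _ _).trans h2.le)
            ((min_le_right _ _).trans (by linarith))
        · exact le_trans (min_le_left _ _) (le_of_lt (hball y hy).1.1)
      linarith
    · by_cases hxD : x ∈ interior D
      · rw [aux_chi_of_mem hxD]
        by_contra h'
        push_neg at h'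
        have e1 : ∀ᶠ y in 𝓝 x, ‖gradient φ y‖ < (‖gradient φ x‖ + 1) / 2 :=
          hNG.eventually_lt_const (by linarith)
        have e2 : ∀ᶠ y in 𝓝 x, infLap φ x - 1 < infLap φ y :=
          hIL.eventually_const_lt (by linarith)
        have e3 : ∀ᶠ y in 𝓝 x, ‖gradient φ x‖ - 1 < ‖gradient φ y‖ :=
          hNG.eventually_const_lt (by linarith)
        have e4 : ∀ᶠ y in 𝓝 x, y ∈ interior D := isOpen_interior.mem_nhds hxD
        obtain ⟨r₀, hr₀, hball⟩ :=
          Metric.eventually_nhds_iff_ball.1 (((e1.and e2).and e3).and e4)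
        have hcon : essLimsupAt F x ≤ (‖gradient φ x‖ - 1) / 2 := by
          refine aux_essLimsupAt_le (b := min (infLap φ x - 1) (‖gradient φ x‖ - 2))
            hr₀ (fun y hy => ?_) (fun y hy => ?_)
          · obtain ⟨⟨⟨_, h2⟩, h3⟩, _⟩ := hball y hy
            have hch := aux_chi_le_one D y
            exact le_min ((min_le_left _ _).trans h2.le)
              ((min_le_right _ _).trans (by linarith))
          · obtain ⟨⟨⟨hy1, _⟩, _⟩, h4⟩ := hball y hy
            have hchi : chi D y = 1 := aux_chi_of_mem (interior_subset h4)
            refine le_trans (min_le_right _ _) ?_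
            rw [hchi]
            linarith
        linarith
      · rw [aux_chi_of_not_mem hxD]
        exact norm_nonneg _
  have key_super : IsLinfGCsuper Ω D u → IsGCsuper Ω D u := by
    intro h x hx φ hφ hmin
    obtain ⟨hNG, hIL⟩ := aux_cont hΩo hφ hx
    have H := h x hx φ (aux_W2InfLoc hΩo hφ) hmin
    set F := fun y => min (infLap φ y) (‖gradient φ y‖ - chi D y) with hFdef
    by_contra h'
    push_neg at h'
    obtain ⟨h1, h2⟩ := h'
    have eIL : ∀ᶠ y in 𝓝 x, infLap φ x / 2 < infLap φ y :=
      hIL.eventually_const_lt (by linarith)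
    have eIL2 : ∀ᶠ y in 𝓝 x, infLap φ y < infLap φ x + 1 :=
      hIL.eventually_lt_const (by linarith)
    by_cases hxD : x ∈ closure D
    · rw [aux_chi_of_mem hxD] at h2
      have e3 : ∀ᶠ y in 𝓝 x, (1 + ‖gradient φ x‖) / 2 < ‖gradient φ y‖ :=
        hNG.eventually_const_lt (by linarith)
      obtain ⟨r₀, hr₀, hball⟩ :=
        Metric.eventually_nhds_iff_ball.1 ((eIL.and eIL2).and e3)
      have hcon : min (infLap φ x / 2) ((‖gradient φ x‖ - 1) / 2) ≤ essLiminfAt F x := by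
        refine aux_le_essLiminfAt (c := infLap φ x + 1) hr₀
          (fun y hy => ?_) (fun y hy => ?_)
        · obtain ⟨⟨hy1, _⟩, hy3⟩ := hball y hy
          have hch := aux_chi_le_one D y
          exact le_min ((min_le_left _ _).trans hy1.le)
            ((min_le_right _ _).trans (by linarith))
        · exact le_trans (min_le_left _ _) (le_of_lt (hball y hy).1.2)
      have hpos : 0 < min (infLap φ x / 2) ((‖gradient φ x‖ - 1) / 2) :=
        lt_min (by linarith) (by linarith)
      linarith
    · rw [aux_chi_of_not_mem hxD] at h2
      have e3 : ∀ᶠ y in 𝓝 x, ‖gradient φ x‖ / 2 < ‖gradient φ y‖ :=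
        hNG.eventually_const_lt (by linarith)
      have e4 : ∀ᶠ y in 𝓝 x, y ∈ (closure D)ᶜ :=
        (isClosed_closure.isOpen_compl).mem_nhds hxD
      obtain ⟨r₀, hr₀, hball⟩ :=
        Metric.eventually_nhds_iff_ball.1 (((eIL.and eIL2).and e3).and e4)
      have hcon : min (infLap φ x / 2) (‖gradient φ x‖ / 2) ≤ essLiminfAt F x := by
        refine aux_le_essLiminfAt (c := infLap φ x + 1) hr₀
          (fun y hy => ?_) (fun y hy => ?_)
        · obtain ⟨⟨⟨hy1, _⟩, hy3⟩, hy4⟩ := hball y hy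
          have hchi : chi D y = 0 := aux_chi_of_not_mem (fun hyD => hy4 (subset_closure hyD))
          refine le_min ((min_le_left _ _).trans hy1.le) ?_
          refine le_trans (min_le_right _ _) ?_
          rw [hchi]
          linarith
        · exact le_trans (min_le_left _ _) (le_of_lt (hball y hy).1.1.2)
      have hpos : 0 < min (infLap φ x / 2) (‖gradient φ x‖ / 2) :=
        lt_min (by linarith) (by linarith)
      linarith
  exact ⟨key_sub, key_super, fun ⟨a, b⟩ => ⟨key_sub a, key_super b⟩⟩

end
end
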